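/- arXiv:2309.01997 — 2 statements merged into one kernel-verified Lean document; each statement's English description precedes it below -/
import Mathlib

section
/- Let A be a finite alphabet with |A| ≥ 2, k a positive integer, and let X ⊆ A* be a regular F̲_k-independent code. The following are equivalent: (i) X is maximal in the family of F̲_k-independent codes; (ii) X is complete; (iii) μ(X) = 1, where μ is the uniform Bernoulli measure. Moreover, every regular F̲_k-independent code can be embedded into a code that is maximal in the family of F̲_k-independent codes. -/
open scoped ENNReal

/-- Length of a longest common prefix of `w` and `w'`. -/
noncomputable def lcpLen {A : Type*} (w w' : List A) : ℕ :=
  sSup {n | ∃ p : List A, p.length = n ∧ p <+: w ∧ p <+: w'}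

/-- The prefix distance `d_P(w,w') = |w| + |w'| - 2|w ∧ w'|`. -/
noncomputable def dP {A : Type*} (w w' : List A) : ℕ :=
  w.length + w'.length - 2 * lcpLen w w'

/-- Length of a longest common suffix of `w` and `w'`. -/
noncomputable def lcsLen {A : Type*} (w w' : List A) : ℕ :=
  sSup {n | ∃ s : List A, s.length = n ∧ s <:+ w ∧ s <:+ w'}

/-- The suffix distance `d_S(w,w') = |w| + |w'| - 2|s|`. -/
noncomputable def dS {A : Type*} (w w' : List A) : ℕ :=
  w.length + w'.length - 2 * lcsLen w w'

/-- Length of a longest common factor of `w` and `w'`. -/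
noncomputable def lcfLen {A : Type*} (w w' : List A) : ℕ :=
  sSup {n | ∃ f : List A, f.length = n ∧ f <:+: w ∧ f <:+: w'}

/-- The factor distance `d_F(w,w') = |w| + |w'| - 2|f|`,
`f` a maximum-length common factor. -/
noncomputable def dF {A : Type*} (w w' : List A) : ℕ :=
  w.length + w'.length - 2 * lcfLen w w'

/-- `n`-fold composition of a binary relation. -/
def relPow {α : Type*} (r : α → α → Prop) : ℕ → α → α → Prop
  | 0 => Eq
  | n + 1 => Relation.Comp (relPow r n) r

/-- `X` is a (variable-length) code: every word of `X*` factorizes uniquely over `X`. -/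
def IsCode {A : Type*} (X : Set (List A)) : Prop :=
  ∀ l m : List (List A), (∀ x ∈ l, x ∈ X) → (∀ x ∈ m, x ∈ X) →
    l.flatten = m.flatten → l = m

/-- `X` is complete: every word is a factor of some word of `X*`. -/
def IsCompleteSet {A : Type*} (X : Set (List A)) : Prop :=
  ∀ w : List A, ∃ l : List (List A), (∀ x ∈ l, x ∈ X) ∧ w <:+: l.flatten

/-- `X ⊆ A*` is a regular language: accepted by a finite deterministic automaton. -/
def IsRegularLang {A : Type*} (X : Set (List A)) : Prop :=
  ∃ (Q : Type) (_ : Fintype Q) (M : DFA A Q), M.accepts = X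

/-- The uniform Bernoulli measure `μ(X) = Σ_{x ∈ X} |A|^{-|x|}`. -/
noncomputable def mu (A : Type*) [Fintype A] (X : Set (List A)) : ℝ≥0∞ :=
  ∑' x : X, ((Fintype.card A : ℝ≥0∞))⁻¹ ^ (x : List A).length

open List

section Aux
variable {A : Type*}

lemma nil_not_mem_of_isCode {X : Set (List A)} (h : IsCode X) : ([] : List A) ∉ X := by
  intro hmem
  have := h [[]] [] (by simp [hmem]) (by simp) (by simp)
  simp at this

lemma isCode_mono {X Y : Set (List A)} (hYX : Y ⊆ X) (h : IsCode X) : IsCode Y :=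
  fun l m hl hm he => h l m (fun x hx => hYX (hl x hx)) (fun x hx => hYX (hm x hx)) he

lemma lcfLen_le {w w' : List A} {B : ℕ}
    (h : ∀ f : List A, f <:+: w → f <:+: w' → f.length ≤ B) : lcfLen w w' ≤ B := by
  refine csSup_le ?_ ?_
  · exact ⟨0, ⟨[], rfl, nil_infix, nil_infix⟩⟩
  · rintro n ⟨f, rfl, h1, h2⟩; exact h f h1 h2

lemma lcfLen_self (w : List A) : lcfLen w w = w.length := by
  refine le_antisymm (lcfLen_le fun f hf _ => hf.length_le) (le_csSup ?_ ?_)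
  · exact ⟨w.length, by rintro n ⟨f, rfl, h1, _⟩; exact h1.length_le⟩
  · exact ⟨w, rfl, infix_rfl, infix_rfl⟩

lemma dF_comm (w w' : List A) : dF w w' = dF w' w := by
  have hset : {n | ∃ f : List A, f.length = n ∧ f <:+: w ∧ f <:+: w'}
      = {n | ∃ f : List A, f.length = n ∧ f <:+: w' ∧ f <:+: w} := by
    ext n
    exact ⟨fun ⟨f, h0, h1, h2⟩ => ⟨f, h0, h2, h1⟩, fun ⟨f, h0, h1, h2⟩ => ⟨f, h0, h2, h1⟩⟩
  unfold dF lcfLen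
  rw [Nat.add_comm, hset]

lemma dF_self (w : List A) : dF w w = 0 := by
  unfold dF; rw [lcfLen_self]; omega

lemma length_flatten_eq_sum_get (l : List (List A)) :
    l.flatten.length = ∑ i : Fin l.length, (l.get i).length := by
  conv_lhs => rw [← List.ofFn_get l]
  rw [length_flatten, map_ofFn, sum_ofFn]
  rfl

end Aux

section Tsum

lemma tsum_pow_eq {ι : Type*} (f : ι → ℝ≥0∞) : ∀ n : ℕ,
    (∑' i, f i) ^ n = ∑' g : Fin n → ι, ∏ i, f (g i)
  | 0 => by
    rw [pow_zero, tsum_fintype]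
    simp
  | (n+1) => by
    rw [pow_succ, tsum_pow_eq f n, mul_comm]
    symm
    calc ∑' g : Fin (n+1) → ι, ∏ i, f (g i)
        = ∑' g : Fin (n+1) → ι,
            f (((Fin.consEquiv fun _ : Fin (n+1) => ι).symm g).1) * ∏ i, f (((Fin.consEquiv fun _ : Fin (n+1) => ι).symm g).2 i) := by
          refine tsum_congr fun g => ?_
          rw [Fin.prod_univ_succ]; rfl
      _ = ∑' p : ι × (Fin n → ι), f p.1 * ∏ i, f (p.2 i) :=
            (Fin.consEquiv fun _ : Fin (n+1) => ι).symm.tsum_eq (fun p => f p.1 * ∏ i, f (p.2 i))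
      _ = (∑' i, f i) * ∑' g : Fin n → ι, ∏ i, f (g i) := by
          rw [ENNReal.tsum_prod (f := fun (a : ι) (b : Fin n → ι) => f a * ∏ i, f (b i))]
          calc ∑' (a : ι) (b : Fin n → ι), f a * ∏ i, f (b i)
              = ∑' (a : ι), f a * ∑' (b : Fin n → ι), ∏ i, f (b i) :=
                tsum_congr fun a => ENNReal.tsum_mul_left
            _ = _ := ENNReal.tsum_mul_right

variable {A : Type*} [Fintype A]

lemma tsum_sigma_words (hA : 2 ≤ Fintype.card A) (K : ℕ) :
    ∑' p : (Σ n : Fin (K+1), (Fin (n:ℕ) → A)), ((Fintype.card A : ℝ≥0∞))⁻¹ ^ ((p.1 : ℕ)) = (K+1 : ℕ) := by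
  classical
  have hc0 : (Fintype.card A : ℝ≥0∞) ≠ 0 := by
    simp; omega
  have hctop : (Fintype.card A : ℝ≥0∞) ≠ ⊤ := ENNReal.natCast_ne_top _
  rw [ENNReal.tsum_sigma']
  have hinner : ∀ n : Fin (K+1),
      (∑' _g : (Fin (n:ℕ) → A), ((Fintype.card A : ℝ≥0∞))⁻¹ ^ ((n : ℕ))) = 1 := by
    intro n
    rw [tsum_fintype, Finset.sum_const, Finset.card_univ, Fintype.card_fun, Fintype.card_fin,
      nsmul_eq_mul, Nat.cast_pow, ← mul_pow, ENNReal.mul_inv_cancel hc0 hctop, one_pow]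
  calc ∑' (n : Fin (K+1)), ∑' (_g : Fin (n:ℕ) → A), ((Fintype.card A : ℝ≥0∞))⁻¹ ^ ((n:ℕ))
      = ∑' (_n : Fin (K+1)), (1:ℝ≥0∞) := tsum_congr hinner
    _ = (K+1 : ℕ) := by
        rw [tsum_fintype, Finset.sum_const, Finset.card_univ, Fintype.card_fin, nsmul_eq_mul, mul_one]

lemma tsum_words_top (hA : 2 ≤ Fintype.card A) :
    ∑' w : List A, ((Fintype.card A : ℝ≥0∞))⁻¹ ^ w.length = ⊤ := by
  by_contra h
  obtain ⟨K, hK⟩ := ENNReal.exists_nat_gt h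
  have hinj : Function.Injective
      (fun p : (Σ n : Fin (K+1), (Fin (n:ℕ) → A)) => List.ofFn p.2) := by
    rintro ⟨n, g⟩ ⟨n', g'⟩ hgg
    simp only at hgg
    have hlen : (n:ℕ) = (n':ℕ) := by
      have := congrArg List.length hgg
      simpa using this
    have hn : n = n' := Fin.ext hlen
    subst hn
    have := List.ofFn_injective hgg
    subst this
    rfl
  have hle := ENNReal.tsum_comp_le_tsum_of_injective hinj
    (fun w : List A => ((Fintype.card A : ℝ≥0∞))⁻¹ ^ w.length)
  rw [show (fun p : (Σ n : Fin (K+1), (Fin (n:ℕ) → A)) =>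
      ((Fintype.card A : ℝ≥0∞))⁻¹ ^ (List.ofFn p.2).length)
      = fun p => ((Fintype.card A : ℝ≥0∞))⁻¹ ^ ((p.1 : ℕ)) from by
        funext p; rw [List.length_ofFn]] at hle
  rw [tsum_sigma_words hA K] at hle
  have : ((K:ℝ≥0∞)) < (K+1 : ℕ) := by
    rw [Nat.cast_add, Nat.cast_one]
    exact ENNReal.lt_add_right (ENNReal.natCast_ne_top _) one_ne_zero
  exact absurd (le_trans hle hK.le) (by simpa using this.not_ge)

lemma tsum_len_le (hA : 2 ≤ Fintype.card A) (K : ℕ) :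
    ∑' l : {l : List A // l.length ≤ K}, ((Fintype.card A : ℝ≥0∞))⁻¹ ^ (l : List A).length
      ≤ (K+1 : ℕ) := by
  set Φ : {l : List A // l.length ≤ K} → (Σ n : Fin (K+1), (Fin (n:ℕ) → A)) :=
    fun l => ⟨⟨(l : List A).length, Nat.lt_succ_of_le l.2⟩, fun i => (l : List A).get ⟨i, i.2⟩⟩
    with hPhi
  have hofn : ∀ l : {l : List A // l.length ≤ K}, List.ofFn (Φ l).2 = (l : List A) := by
    intro l
    exact List.ofFn_get _
  have hinj : Function.Injective Φ := by
    intro x y h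
    have h2 : List.ofFn (Φ x).2 = List.ofFn (Φ y).2 := by rw [h]
    rw [hofn, hofn] at h2
    exact Subtype.ext h2
  have hle := ENNReal.tsum_comp_le_tsum_of_injective hinj
    (fun p : (Σ n : Fin (K+1), (Fin (n:ℕ) → A)) => ((Fintype.card A : ℝ≥0∞))⁻¹ ^ ((p.1 : ℕ)))
  rw [tsum_sigma_words hA K] at hle
  exact hle

end Tsum

section Kraft
variable {A : Type*} [Fintype A]

lemma pow_le_linear_le_one {S : ℝ≥0∞} {L : ℕ} (h : ∀ n : ℕ, S ^ n ≤ n * L + 1) : S ≤ 1 := by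
  by_contra hgt
  push_neg at hgt
  have hStop : S ≠ ⊤ := by
    intro htop
    have h1 := h 1
    rw [pow_one, htop] at h1
    have hne : ((1:ℕ) * L + 1 : ℝ≥0∞) ≠ ⊤ := by
      refine ENNReal.add_ne_top.mpr ⟨?_, ENNReal.one_ne_top⟩
      exact ENNReal.mul_ne_top (ENNReal.natCast_ne_top 1) (ENNReal.natCast_ne_top L)
    exact hne (top_le_iff.mp (by exact_mod_cast h1))
  set e := S - 1 with he
  have hSe : S = 1 + e := (add_tsub_cancel_of_le hgt.le).symm
  have he0 : e ≠ 0 := (tsub_pos_of_lt hgt).ne'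
  have hetop : e ≠ ⊤ := by
    intro htop
    rw [hSe, htop] at hStop
    simp at hStop
  have he2 : (e^2 : ℝ≥0∞) ≠ 0 := pow_ne_zero 2 he0
  have he2top : (e^2 : ℝ≥0∞) ≠ ⊤ := by
    exact ENNReal.pow_ne_top hetop
  have hdivtop : ((L:ℝ≥0∞) + 1) / e^2 ≠ ⊤ :=
    (ENNReal.div_lt_top (by simp [ENNReal.add_ne_top, ENNReal.natCast_ne_top]) he2).ne
  obtain ⟨j, hj⟩ := ENNReal.exists_nat_gt hdivtop
  have hj1 : 1 ≤ j := by
    rcases Nat.eq_zero_or_pos j with rfl | h'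
    · simp at hj
    · exact h'
  have hLj : ((L:ℝ≥0∞) + 1) < (j : ℝ≥0∞) * e^2 :=
    (ENNReal.div_lt_iff (Or.inl he2) (Or.inl he2top)).mp hj
  set n := 2*j+1 with hn
  have hbin : ((n.choose 2 : ℕ) : ℝ≥0∞) * e^2 ≤ S ^ n := by
    rw [hSe, add_comm, add_pow]
    have h2n : 2 ∈ Finset.range (n+1) := by
      simp only [Finset.mem_range]; omega
    calc ((n.choose 2 : ℕ) : ℝ≥0∞) * e^2
        = e^2 * 1^(n-2) * ((n.choose 2 : ℕ) : ℝ≥0∞) := by rw [one_pow, mul_one, mul_comm]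
      _ ≤ ∑ m ∈ Finset.range (n+1), e^m * 1^(n-m) * ((n.choose m : ℕ) : ℝ≥0∞) :=
          Finset.single_le_sum (f := fun m => e^m * 1^(n-m) * ((n.choose m : ℕ) : ℝ≥0∞))
            (fun _ _ => zero_le) h2n
  have hchoose : (n.choose 2) = n * j := by
    rw [Nat.choose_two_right]
    have h1 : n - 1 = 2*j := by omega
    rw [h1, show n * (2*j) = n * j * 2 by ring, Nat.mul_div_cancel _ (by norm_num)]
  have hcon := le_trans hbin (h n)
  rw [hchoose, Nat.cast_mul, mul_assoc] at hcon
  have hfin : ((n:ℝ≥0∞)) * ((L:ℝ≥0∞)+1) < (n:ℝ≥0∞) * ((j:ℝ≥0∞) * e^2) :=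
    ENNReal.mul_lt_mul_right (by exact_mod_cast (by omega : n ≠ 0)) (ENNReal.natCast_ne_top n) hLj
  have hle2 : ((n:ℝ≥0∞)) * L + 1 ≤ (n:ℝ≥0∞) * ((L:ℝ≥0∞)+1) := by
    rw [mul_add, mul_one]
    have : (1:ℝ≥0∞) ≤ (n:ℝ≥0∞) := by exact_mod_cast (by omega : 1 ≤ n)
    exact add_le_add_right this _
  exact absurd (lt_of_le_of_lt (le_trans hcon hle2) hfin) (lt_irrefl _)

lemma kraft_finset (hA : 2 ≤ Fintype.card A) (F : Finset (List A))
    (hc : IsCode {x : List A | x ∈ F}) :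
    ∑ x ∈ F, ((Fintype.card A : ℝ≥0∞))⁻¹ ^ x.length ≤ 1 := by
  classical
  set L := F.sup List.length with hL
  apply pow_le_linear_le_one (L := L)
  intro n
  have hsum : ∑ x ∈ F, ((Fintype.card A : ℝ≥0∞))⁻¹ ^ x.length
      = ∑' x : {x : List A // x ∈ F}, ((Fintype.card A : ℝ≥0∞))⁻¹ ^ (x : List A).length :=
    (Finset.tsum_subtype F _).symm
  rw [hsum, tsum_pow_eq]
  set Ψ : (Fin n → {x : List A // x ∈ F}) → {l : List A // l.length ≤ n * L} :=
    fun g => ⟨(List.ofFn (fun i => (g i : List A))).flatten, by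
      rw [length_flatten, map_ofFn, sum_ofFn]
      calc ∑ i : Fin n, (List.length ∘ (fun i => ((g i : List A)))) i
          ≤ ∑ _i : Fin n, L :=
            Finset.sum_le_sum (fun i _ => Finset.le_sup (f := List.length) (g i).2)
        _ = n * L := by rw [Finset.sum_const, Finset.card_univ, Fintype.card_fin, smul_eq_mul]⟩
    with hPsi
  have hlenPsi : ∀ g : Fin n → {x : List A // x ∈ F},
      (Ψ g : List A).length = ∑ i : Fin n, (g i : List A).length := by
    intro g
    show ((List.ofFn (fun i => (g i : List A))).flatten).length = _
    rw [length_flatten, map_ofFn, sum_ofFn]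
    rfl
  have hinj : Function.Injective Ψ := by
    intro g g' hgg
    have hfl : (List.ofFn (fun i => (g i : List A))).flatten
        = (List.ofFn (fun i => (g' i : List A))).flatten := congrArg Subtype.val hgg
    have hmem1 : ∀ x ∈ List.ofFn (fun i => (g i : List A)), x ∈ {x : List A | x ∈ F} := by
      intro x hx
      rw [List.mem_ofFn] at hx
      obtain ⟨i, rfl⟩ := hx
      exact (g i).2
    have hmem2 : ∀ x ∈ List.ofFn (fun i => (g' i : List A)), x ∈ {x : List A | x ∈ F} := by
      intro x hx
      rw [List.mem_ofFn] at hx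
      obtain ⟨i, rfl⟩ := hx
      exact (g' i).2
    have heq2 := hc _ _ hmem1 hmem2 hfl
    have heq3 := List.ofFn_injective heq2
    funext i
    exact Subtype.ext (congrFun heq3 i)
  calc ∑' g : Fin n → {x : List A // x ∈ F},
        ∏ i, ((Fintype.card A : ℝ≥0∞))⁻¹ ^ ((g i : List A).length)
      = ∑' g : Fin n → {x : List A // x ∈ F},
          ((Fintype.card A : ℝ≥0∞))⁻¹ ^ ((Ψ g : List A).length) := by
        refine tsum_congr fun g => ?_
        rw [Finset.prod_pow_eq_pow_sum, hlenPsi]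
    _ ≤ ∑' l : {l : List A // l.length ≤ n * L},
          ((Fintype.card A : ℝ≥0∞))⁻¹ ^ ((l : List A).length) :=
        ENNReal.tsum_comp_le_tsum_of_injective hinj _
    _ ≤ ((n*L)+1 : ℕ) := tsum_len_le hA (n*L)
    _ ≤ (n:ℝ≥0∞) * L + 1 := by
        push_cast
        exact le_refl _

lemma kraft (hA : 2 ≤ Fintype.card A) {X : Set (List A)} (hX : IsCode X) : mu A X ≤ 1 := by
  classical
  rw [mu, ENNReal.tsum_eq_iSup_sum]
  apply iSup_le
  intro s
  have himg : ∑ x ∈ s, ((Fintype.card A : ℝ≥0∞))⁻¹ ^ (x : List A).length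
      = ∑ x ∈ s.image Subtype.val, ((Fintype.card A : ℝ≥0∞))⁻¹ ^ x.length := by
    rw [Finset.sum_image (by intro x _ y _ h; exact Subtype.ext h)]
  rw [himg]
  apply kraft_finset hA
  apply isCode_mono _ hX
  intro x hx
  simp only [Set.mem_setOf_eq, Finset.mem_image] at hx
  obtain ⟨y, _, rfl⟩ := hx
  exact y.2

end Kraft

section DFAPart
variable {A : Type*}

lemma dfa_shorten_aux {Q : Type} [Fintype Q] (M : DFA A Q) (P : Q → Prop) (q : Q) :
    ∀ n : ℕ, ∀ t : List A, t.length ≤ n → P (M.evalFrom q t) →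
      ∃ t' : List A, t'.length < Fintype.card Q ∧ P (M.evalFrom q t') := by
  intro n
  induction n with
  | zero =>
    intro t ht hP
    refine ⟨t, ?_, hP⟩
    have : 0 < Fintype.card Q := Fintype.card_pos_iff.mpr ⟨q⟩
    omega
  | succ n IH =>
    intro t ht hP
    by_cases hlt : t.length < Fintype.card Q
    · exact ⟨t, hlt, hP⟩
    · push_neg at hlt
      obtain ⟨i, j, hij, hfij⟩ := Fintype.exists_ne_map_eq_of_card_lt
        (fun i : Fin (Fintype.card Q + 1) => M.evalFrom q (t.take i)) (by simp)
      have key : ∀ i j : Fin (Fintype.card Q + 1), (i:ℕ) < (j:ℕ) →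
          M.evalFrom q (t.take i) = M.evalFrom q (t.take j) →
          ∃ t' : List A, t'.length < Fintype.card Q ∧ P (M.evalFrom q t') := by
        intro i j hlt2 hfij2
        have hjt : (j : ℕ) ≤ t.length := by omega
        set t' := t.take i ++ t.drop j with ht'
        have hev : M.evalFrom q t' = M.evalFrom q t := by
          rw [ht', DFA.evalFrom_of_append, hfij2]
          rw [← DFA.evalFrom_of_append, List.take_append_drop]
        have hlen : t'.length ≤ n := by
          rw [ht', List.length_append, List.length_take, List.length_drop]
          omega
        exact IH t' hlen (by rw [hev]; exact hP)
      rcases Nat.lt_or_ge (i:ℕ) (j:ℕ) with h' | h'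
      · exact key i j h' hfij
      · have hne : (i:ℕ) ≠ (j:ℕ) := fun hh => hij (Fin.ext hh)
        exact key j i (by omega) hfij.symm

lemma dfa_shorten {Q : Type} [Fintype Q] (M : DFA A Q) (P : Q → Prop) (q : Q)
    (h : ∃ t : List A, P (M.evalFrom q t)) :
    ∃ t' : List A, t'.length < Fintype.card Q ∧ P (M.evalFrom q t') := by
  obtain ⟨t, ht⟩ := h
  exact dfa_shorten_aux M P q t.length t le_rfl ht

lemma flatten_split (l : List (List A)) (t : ℕ) (h : t < l.flatten.length) :
    ∃ l₁ x l₂, l = l₁ ++ x :: l₂ ∧ l₁.flatten.length ≤ t ∧ t < l₁.flatten.length + x.length := by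
  induction l generalizing t with
  | nil => simp at h
  | cons x l ih =>
    by_cases hx : t < x.length
    · exact ⟨[], x, l, rfl, by simp, by simpa using hx⟩
    · push_neg at hx
      have h' : t - x.length < l.flatten.length := by
        rw [flatten_cons, List.length_append] at h
        omega
      obtain ⟨l₁, x', l₂, rfl, h1, h2⟩ := ih (t - x.length) h'
      refine ⟨x :: l₁, x', l₂, rfl, ?_, ?_⟩
      · rw [flatten_cons, List.length_append]; omega
      · rw [flatten_cons, List.length_append]; omega

variable {Q : Type} [Fintype Q]

lemma trim_left {X : Set (List A)} (M : DFA A Q) (hM : M.accepts = X)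
    (l : List (List A)) (hl : ∀ x ∈ l, x ∈ X) (u s : List A) (hus : l.flatten = u ++ s) :
    ∃ (u' : List A) (l' : List (List A)), u'.length < Fintype.card Q ∧
      (∀ x ∈ l', x ∈ X) ∧ l'.flatten = u' ++ s := by
  rcases Nat.lt_or_ge u.length l.flatten.length with h | h
  · obtain ⟨l₁, x, l₂, rfl, h1, h2⟩ := flatten_split l u.length h
    have hx : x ∈ X := hl x (by simp)
    set d := u.length - l₁.flatten.length with hd
    have hdx : d ≤ x.length := by omega
    have hfl : (l₁ ++ x :: l₂).flatten = l₁.flatten ++ (x ++ l₂.flatten) := by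
      rw [flatten_append, flatten_cons]
    have hu : u = l₁.flatten ++ x.take d := by
      have h3 : ((l₁ ++ x :: l₂).flatten).take u.length = u := by
        rw [hus, take_left']
        rfl
      rw [hfl, take_append, take_of_length_le h1,
        take_append_of_le_length hdx] at h3
      exact h3.symm
    have hs : s = x.drop d ++ l₂.flatten := by
      have h3 : ((l₁ ++ x :: l₂).flatten).drop u.length = s := by
        rw [hus, drop_left']
        rfl
      rw [hfl, drop_append, drop_eq_nil_of_le h1,
        drop_append_of_le_length hdx, nil_append] at h3
      exact h3.symm
    obtain ⟨z, hz1, hz2⟩ := dfa_shorten M (fun st => st = M.evalFrom M.start (x.take d))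
      M.start ⟨x.take d, rfl⟩
    refine ⟨z, (z ++ x.drop d) :: l₂, hz1, ?_, ?_⟩
    · intro b hb
      rcases List.mem_cons.mp hb with rfl | hb
      · rw [← hM]
        apply (DFA.mem_accepts M).mpr
        show M.evalFrom M.start (z ++ x.drop d) ∈ M.accept
        rw [DFA.evalFrom_of_append, hz2, ← DFA.evalFrom_of_append, List.take_append_drop]
        have : x ∈ M.accepts := by rw [hM]; exact hx
        rwa [DFA.mem_accepts] at this
      · exact hl b (by simp [hb])
    · rw [flatten_cons, hs, append_assoc]
  · have hslen : s.length = 0 := by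
      have := congrArg List.length hus
      rw [List.length_append] at this
      omega
    have hs : s = [] := List.length_eq_zero_iff.mp hslen
    refine ⟨[], [], Fintype.card_pos_iff.mpr ⟨M.start⟩, by simp, by simp [hs]⟩

lemma trim_right {X : Set (List A)} (M : DFA A Q) (hM : M.accepts = X)
    (l : List (List A)) (hl : ∀ x ∈ l, x ∈ X) (p v : List A) (hpv : l.flatten = p ++ v) :
    ∃ (v' : List A) (l' : List (List A)), v'.length < Fintype.card Q ∧
      (∀ x ∈ l', x ∈ X) ∧ l'.flatten = p ++ v' := by
  rcases Nat.lt_or_ge p.length l.flatten.length with h | h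
  · obtain ⟨l₁, x, l₂, rfl, h1, h2⟩ := flatten_split l p.length h
    have hx : x ∈ X := hl x (by simp)
    set d := p.length - l₁.flatten.length with hd
    have hdx : d ≤ x.length := by omega
    have hfl : (l₁ ++ x :: l₂).flatten = l₁.flatten ++ (x ++ l₂.flatten) := by
      rw [flatten_append, flatten_cons]
    have hp : p = l₁.flatten ++ x.take d := by
      have h3 : ((l₁ ++ x :: l₂).flatten).take p.length = p := by
        rw [hpv, take_left']
        rfl
      rw [hfl, take_append, take_of_length_le h1,
        take_append_of_le_length hdx] at h3
      exact h3.symm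
    have hacc : ∃ t : List A, (M.evalFrom (M.evalFrom M.start (x.take d)) t) ∈ M.accept := by
      refine ⟨x.drop d, ?_⟩
      rw [← DFA.evalFrom_of_append, List.take_append_drop]
      have : x ∈ M.accepts := by rw [hM]; exact hx
      rwa [DFA.mem_accepts] at this
    obtain ⟨z, hz1, hz2⟩ := dfa_shorten M (fun st => st ∈ M.accept)
      (M.evalFrom M.start (x.take d)) hacc
    refine ⟨z, l₁ ++ [x.take d ++ z], hz1, ?_, ?_⟩
    · intro b hb
      rcases List.mem_append.mp hb with hb | hb
      · exact hl b (by simp [hb])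
      · rw [List.mem_singleton] at hb
        subst hb
        rw [← hM]; apply (DFA.mem_accepts M).mpr
        show M.evalFrom M.start (x.take d ++ z) ∈ M.accept
        rw [DFA.evalFrom_of_append]
        exact hz2
    · rw [flatten_append, flatten_cons, flatten_nil, append_nil, hp, append_assoc]
  · have hvlen : v.length = 0 := by
      have := congrArg List.length hpv
      rw [List.length_append] at this
      omega
    have hv : v = [] := List.length_eq_zero_iff.mp hvlen
    refine ⟨[], l, Fintype.card_pos_iff.mpr ⟨M.start⟩, hl, by rw [hpv, hv]⟩

lemma factor_context {X : Set (List A)} (M : DFA A Q) (hM : M.accepts = X)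
    {w : List A} (l : List (List A)) (hl : ∀ x ∈ l, x ∈ X) (hw : w <:+: l.flatten) :
    ∃ (u v : List A) (l' : List (List A)), u.length < Fintype.card Q ∧
      v.length < Fintype.card Q ∧ (∀ x ∈ l', x ∈ X) ∧ l'.flatten = u ++ (w ++ v) := by
  obtain ⟨u0, v0, h⟩ := hw
  obtain ⟨u, l1, hu, hl1, h1⟩ := trim_left M hM l hl u0 (w ++ v0)
    (by rw [← h, append_assoc])
  obtain ⟨v, l2, hv, hl2, h2⟩ := trim_right M hM l1 hl1 (u ++ w) v0
    (by rw [h1, append_assoc])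
  exact ⟨u, v, l2, hu, hv, hl2, by rw [h2, append_assoc]⟩

end DFAPart


section CompletePart
variable {A : Type*} [Fintype A]

lemma lambda_tsum_lt_top (hA : 2 ≤ Fintype.card A) {X : Set (List A)} (hmu : mu A X < 1) :
    ∑' l : {l : List (List A) // ∀ x ∈ l, x ∈ X},
      ((Fintype.card A : ℝ≥0∞))⁻¹ ^ (l : List (List A)).flatten.length < ⊤ := by
  set c := ((Fintype.card A : ℝ≥0∞))⁻¹ with hc
  set Φ : {l : List (List A) // ∀ x ∈ l, x ∈ X} → (Σ n : ℕ, (Fin n → {x : List A // x ∈ X})) :=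
    fun l => ⟨(l : List (List A)).length,
      fun i => ⟨(l : List (List A)).get i, l.2 _ (List.get_mem _ i)⟩⟩ with hPhi
  have hinj : Function.Injective Φ := by
    intro x y h
    have h2 := congrArg (fun p : (Σ n : ℕ, (Fin n → {x : List A // x ∈ X})) =>
      List.ofFn (fun i => (p.2 i : List A))) h
    change List.ofFn (x : List (List A)).get = List.ofFn (y : List (List A)).get at h2
    rw [List.ofFn_get, List.ofFn_get] at h2
    exact Subtype.ext h2
  set G : (Σ n : ℕ, (Fin n → {x : List A // x ∈ X})) → ℝ≥0∞ :=
    fun p => ∏ i, c ^ ((p.2 i : List A).length) with hG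
  have hpt : ∀ l : {l : List (List A) // ∀ x ∈ l, x ∈ X},
      c ^ (l : List (List A)).flatten.length = G (Φ l) := by
    intro l
    rw [hG, hPhi]
    simp only
    rw [Finset.prod_pow_eq_pow_sum, length_flatten_eq_sum_get]
  calc ∑' l : {l : List (List A) // ∀ x ∈ l, x ∈ X},
        c ^ (l : List (List A)).flatten.length
      = ∑' l : {l : List (List A) // ∀ x ∈ l, x ∈ X}, G (Φ l) := tsum_congr hpt
    _ ≤ ∑' p : (Σ n : ℕ, (Fin n → {x : List A // x ∈ X})), G p :=
        ENNReal.tsum_comp_le_tsum_of_injective hinj G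
    _ = ∑' n : ℕ, ∑' g : (Fin n → {x : List A // x ∈ X}), ∏ i, c ^ ((g i : List A).length) :=
        ENNReal.tsum_sigma' G
    _ = ∑' n : ℕ, (mu A X) ^ n := by
        refine tsum_congr fun n => ?_
        rw [mu, tsum_pow_eq]
    _ = (1 - mu A X)⁻¹ := ENNReal.tsum_geometric _
    _ < ⊤ := ENNReal.inv_lt_top.mpr (tsub_pos_of_lt hmu)

lemma complete_mu_eq_one (hA : 2 ≤ Fintype.card A) {X : Set (List A)}
    (hreg : IsRegularLang X) (hcode : IsCode X) (hcomp : IsCompleteSet X) : mu A X = 1 := by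
  have hk := kraft hA hcode
  rcases eq_or_lt_of_le hk with h | hlt
  · exact h
  exfalso
  obtain ⟨Q, hQfin, M, hM⟩ := hreg
  haveI := hQfin
  set c := (Fintype.card A : ℝ≥0∞) with hc
  have hc0 : c ≠ 0 := by
    rw [hc]
    exact_mod_cast (by omega : Fintype.card A ≠ 0)
  have hctop : c ≠ ⊤ := ENNReal.natCast_ne_top _
  set N := Fintype.card Q with hN
  have hch : ∀ w : List A, ∃ (u : List A) (v : List A) (l' : List (List A)),
      u.length < N ∧ v.length < N ∧ (∀ x ∈ l', x ∈ X) ∧ l'.flatten = u ++ (w ++ v) := by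
    intro w
    obtain ⟨l, hl, hwf⟩ := hcomp w
    obtain ⟨u, v, l', h1, h2, h3, h4⟩ := factor_context M hM l hl hwf
    exact ⟨u, v, l', h1, h2, h3, h4⟩
  choose uu vv lw hu hv hlw hfl using hch
  haveI : Finite {t : List A // t.length < N} := by
    apply Finite.of_injective (f := fun t : {t : List A // t.length < N} =>
      (⟨⟨(t : List A).length, t.2⟩, fun i => (t : List A).get ⟨i, i.2⟩⟩ :
        Σ n : Fin N, (Fin (n:ℕ) → A)))
    intro x y h
    have h2 := congrArg (fun p : (Σ n : Fin N, (Fin (n:ℕ) → A)) => List.ofFn p.2) h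
    simp only at h2
    rw [List.ofFn_get, List.ofFn_get] at h2
    exact Subtype.ext h2
  haveI : Fintype {t : List A // t.length < N} := Fintype.ofFinite _
  set Short := {t : List A // t.length < N}
  set Lam := {l : List (List A) // ∀ x ∈ l, x ∈ X}
  set Φ : List A → Short × Short × Lam :=
    fun w => (⟨uu w, hu w⟩, ⟨vv w, hv w⟩, ⟨lw w, hlw w⟩) with hPhi
  have hinj : Function.Injective Φ := by
    intro w w' h
    have h1 : uu w = uu w' := congrArg (fun p : Short × Short × Lam => (p.1 : List A)) h
    have h2 : vv w = vv w' := congrArg (fun p : Short × Short × Lam => (p.2.1 : List A)) h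
    have h3 : lw w = lw w' := congrArg (fun p : Short × Short × Lam => (p.2.2 : List (List A))) h
    have e3 : uu w ++ (w ++ vv w) = uu w ++ (w' ++ vv w) := by
      conv_lhs => rw [← hfl w]
      rw [h3, hfl w', ← h1, ← h2]
    exact List.append_cancel_right (List.append_cancel_left e3)
  set H : Short × Short × Lam → ℝ≥0∞ :=
    fun p => c⁻¹ ^ ((p.2.2 : List (List A)).flatten.length) with hH
  have hT : ∑' l : Lam, c⁻¹ ^ (l : List (List A)).flatten.length < ⊤ :=
    lambda_tsum_lt_top hA hlt
  have hprod : ∑' p : Short × Short × Lam, H p < ⊤ := by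
    rw [ENNReal.tsum_prod (f := fun (a : Short) (q : Short × Lam) =>
      c⁻¹ ^ ((q.2 : List (List A)).flatten.length))]
    have hin : ∀ _a : Short, (∑' q : Short × Lam, c⁻¹ ^ ((q.2 : List (List A)).flatten.length))
        = (Fintype.card Short : ℝ≥0∞) * ∑' l : Lam, c⁻¹ ^ (l : List (List A)).flatten.length := by
      intro a
      rw [ENNReal.tsum_prod (f := fun (_b : Short) (l : Lam) =>
        c⁻¹ ^ ((l : List (List A)).flatten.length))]
      rw [tsum_fintype]
      rw [Finset.sum_const, Finset.card_univ, nsmul_eq_mul]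
    calc ∑' (a : Short), ∑' q : Short × Lam, c⁻¹ ^ ((q.2 : List (List A)).flatten.length)
        = ∑' (_a : Short), (Fintype.card Short : ℝ≥0∞) *
            ∑' l : Lam, c⁻¹ ^ (l : List (List A)).flatten.length := tsum_congr hin
      _ = (Fintype.card Short : ℝ≥0∞) * ((Fintype.card Short : ℝ≥0∞) *
            ∑' l : Lam, c⁻¹ ^ (l : List (List A)).flatten.length) := by
          rw [tsum_fintype, Finset.sum_const, Finset.card_univ, nsmul_eq_mul]
      _ < ⊤ := by
          apply ENNReal.mul_lt_top (by simp [ENNReal.natCast_ne_top])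
          exact ENNReal.mul_lt_top (by simp [ENNReal.natCast_ne_top]) hT
  have hinvle : c⁻¹ ≤ 1 := by
    rw [ENNReal.inv_le_one]
    show (1:ℝ≥0∞) ≤ (Fintype.card A : ℝ≥0∞)
    exact Nat.one_le_cast.mpr (by omega)
  have hpt : ∀ w : List A, c⁻¹ ^ w.length ≤ c ^ (2*N) * H (Φ w) := by
    intro w
    have hexp : (lw w).flatten.length ≤ w.length + 2*N := by
      have := congrArg List.length (hfl w)
      rw [List.length_append, List.length_append] at this
      have h1 := hu w
      have h2 := hv w
      omega
    have hHw : H (Φ w) = c⁻¹ ^ (lw w).flatten.length := rfl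
    calc c⁻¹ ^ w.length
        = (c ^ (2*N) * c⁻¹ ^ (2*N)) * c⁻¹ ^ w.length := by
          rw [← mul_pow, ENNReal.mul_inv_cancel hc0 hctop, one_pow, one_mul]
      _ = c ^ (2*N) * c⁻¹ ^ (w.length + 2*N) := by
          rw [pow_add, mul_assoc, mul_comm (c⁻¹ ^ w.length) (c⁻¹ ^ (2*N))]
      _ ≤ c ^ (2*N) * H (Φ w) := by
          rw [hHw]
          exact mul_le_mul_right (pow_le_pow_of_le_one zero_le hinvle hexp) _
  have hbig : (⊤ : ℝ≥0∞) ≤ c ^ (2*N) * ∑' p : Short × Short × Lam, H p := by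
    calc (⊤ : ℝ≥0∞) = ∑' w : List A, c⁻¹ ^ w.length := (tsum_words_top hA).symm
      _ ≤ ∑' w : List A, c ^ (2*N) * H (Φ w) := ENNReal.tsum_le_tsum hpt
      _ = c ^ (2*N) * ∑' w : List A, H (Φ w) := ENNReal.tsum_mul_left
      _ ≤ c ^ (2*N) * ∑' p : Short × Short × Lam, H p :=
          mul_le_mul_right (ENNReal.tsum_comp_le_tsum_of_injective hinj H) _
  have : c ^ (2*N) * ∑' p : Short × Short × Lam, H p < ⊤ :=
    ENNReal.mul_lt_top (ENNReal.pow_ne_top hctop).lt_top hprod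
  exact this.ne (top_le_iff.mp hbig)

end CompletePart

section Extension
variable {A : Type*}

def blockW (a b : A) (w : List A) : List A := List.replicate (w.length+1) a ++ b :: w
def blockQ (a b : A) (w : List A) : List A := blockW a b w ++ [b]
def bigY (a b : A) (w : List A) (m : ℕ) : List A := (List.replicate m (blockQ a b w)).flatten

lemma length_blockW (a b : A) (w : List A) : (blockW a b w).length = 2 * w.length + 2 := by
  unfold blockW
  rw [List.length_append, List.length_replicate, List.length_cons]
  omega

lemma length_blockQ (a b : A) (w : List A) : (blockQ a b w).length = 2 * w.length + 3 := by
  unfold blockQ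
  rw [List.length_append, length_blockW]
  rfl

lemma bigY_succ (a b : A) (w : List A) (m : ℕ) :
    bigY a b w (m+1) = blockQ a b w ++ bigY a b w m := by
  unfold bigY
  rw [List.replicate_succ, flatten_cons]

lemma bigY_add (a b : A) (w : List A) (m₁ m₂ : ℕ) :
    bigY a b w (m₁ + m₂) = bigY a b w m₁ ++ bigY a b w m₂ := by
  unfold bigY
  rw [List.replicate_add, flatten_append]

lemma length_bigY (a b : A) (w : List A) (m : ℕ) :
    (bigY a b w m).length = m * (2 * w.length + 3) := by
  unfold bigY
  rw [length_flatten, map_replicate, length_blockQ, sum_replicate, smul_eq_mul]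

lemma blockW_prefix_take (a b : A) (w : List A) (m : ℕ) (hm : 1 ≤ m) :
    (bigY a b w m).take (2*w.length+2) = blockW a b w := by
  obtain ⟨m', rfl⟩ : ∃ m', m = m' + 1 := ⟨m - 1, by omega⟩
  rw [bigY_succ]
  unfold blockQ
  rw [append_assoc]
  exact take_left' (length_blockW a b w)

lemma w_infix_blockW (a b : A) (w : List A) : w <:+: blockW a b w :=
  ⟨List.replicate (w.length+1) a ++ [b], [], by simp [blockW]⟩

lemma blockQ_getElem_a (a b : A) (w : List A) {j : ℕ} (hj : j < w.length + 1) :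
    (blockQ a b w)[j]'(by rw [length_blockQ]; omega) = a := by
  unfold blockQ blockW
  rw [List.getElem_append_left (by
    rw [List.length_append, List.length_replicate, List.length_cons]; omega :
    j < (List.replicate (w.length+1) a ++ b :: w).length)]
  rw [List.getElem_append_left (by simpa using hj : j < (List.replicate (w.length+1) a).length)]
  exact List.getElem_replicate _

lemma blockQ_getElem_b (a b : A) (w : List A) {j : ℕ}
    (hj : j = w.length + 1 ∨ j = 2*w.length + 2) :
    (blockQ a b w)[j]'(by rw [length_blockQ]; rcases hj with rfl | rfl <;> omega) = b := by
  rcases hj with rfl | rfl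
  · unfold blockQ blockW
    rw [List.getElem_append_left (by
      rw [List.length_append, List.length_replicate, List.length_cons]; omega :
      w.length + 1 < (List.replicate (w.length+1) a ++ b :: w).length)]
    rw [List.getElem_append_right (by simp : (List.replicate (w.length+1) a).length ≤ w.length + 1)]
    simp
  · unfold blockQ
    rw [List.getElem_append_right (by rw [length_blockW] : (blockW a b w).length ≤ 2*w.length+2)]
    simp [length_blockW]

lemma bigY_getElem_prefix (a b : A) (w : List A) (m : ℕ) (hm : 1 ≤ m) {j : ℕ}
    (hj : j < 2*w.length+3) :
    (bigY a b w m)[j]'(by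
      rw [length_bigY]
      have : 1 * (2*w.length+3) ≤ m * (2*w.length+3) := Nat.mul_le_mul_right _ hm
      omega) = (blockQ a b w)[j]'(by rw [length_blockQ]; omega) := by
  obtain ⟨m', rfl⟩ : ∃ m', m = m' + 1 := ⟨m - 1, by omega⟩
  rw [List.getElem_of_eq (bigY_succ a b w m')]
  exact List.getElem_append_left (by rw [length_blockQ]; omega)

lemma bigY_border {a b : A} (hab : a ≠ b) (w : List A) (m : ℕ) (hm : 2 ≤ m) :
    ∀ s, 1 ≤ s → s < (bigY a b w m).length →
      (bigY a b w m).drop s = (bigY a b w m).take ((bigY a b w m).length - s) →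
      w <:+: (bigY a b w m).take s := by
  intro s hs1 hs2 hb
  have hYlen : (bigY a b w m).length = m * (2*w.length+3) := length_bigY a b w m
  have hmul : 2 * (2*w.length+3) ≤ m * (2*w.length+3) := Nat.mul_le_mul_right _ hm
  rcases Nat.lt_or_ge s (2*w.length+2) with hlt | hge
  · exfalso
    obtain ⟨cc, hc1, hc2⟩ : ∃ cc, cc < w.length+1 ∧
        (s + cc = w.length+1 ∨ s + cc = 2*w.length+2) := by
      rcases le_or_gt s (w.length+1) with h' | h'
      · exact ⟨w.length+1-s, by omega, Or.inl (by omega)⟩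
      · exact ⟨2*w.length+2-s, by omega, Or.inr (by omega)⟩
    have hYc : (bigY a b w m)[cc]'(by rw [hYlen]; omega) = a := by
      rw [bigY_getElem_prefix a b w m (by omega) (by omega)]
      exact blockQ_getElem_a a b w (by omega)
    have hYcs : (bigY a b w m)[s+cc]'(by rw [hYlen]; omega) = b := by
      rw [bigY_getElem_prefix a b w m (by omega) (by omega)]
      exact blockQ_getElem_b a b w hc2
    have h1 : ((bigY a b w m).drop s)[cc]'(by rw [List.length_drop, hYlen]; omega)
        = ((bigY a b w m).take ((bigY a b w m).length - s))[cc]'(by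
            rw [List.length_take, hYlen]; simp; omega) := List.getElem_of_eq hb _
    rw [List.getElem_drop] at h1
    rw [List.getElem_take] at h1
    rw [hYc, hYcs] at h1
    exact hab h1.symm
  · have h1 : (bigY a b w m).take (2*w.length+2) = blockW a b w :=
      blockW_prefix_take a b w m (by omega)
    have h2 : (bigY a b w m).take s = blockW a b w ++
        (((bigY a b w m).drop (2*w.length+2)).take (s - (2*w.length+2))) := by
      conv_lhs => rw [show s = (2*w.length+2) + (s - (2*w.length+2)) from by omega]
      rw [take_add, h1]
    exact (w_infix_blockW a b w).trans (by rw [h2]; exact (prefix_append _ _).isInfix)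

lemma bigY_factor (a b : A) (w : List A) (m : ℕ) {f : List A} (hf : f <:+: bigY a b w m)
    (hlen : 2 * (2*w.length+3) ≤ f.length) : w <:+: f := by
  set p := 2*w.length+3 with hp
  obtain ⟨u, v, huv⟩ := hf
  set t := u.length with ht
  have hp0 : 0 < p := by omega
  set q := t / p with hq
  have hq1 : q * p ≤ t := Nat.div_mul_le_self t p
  have hq2 : t < q * p + p := by
    have hmod1 := Nat.div_add_mod t p
    rw [← hq] at hmod1
    have hmod2 := Nat.mod_lt t hp0
    have hcomm : p * q = q * p := Nat.mul_comm p q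
    omega
  set j := q + 1 with hj
  have hjp1 : t < j * p := by rw [hj, add_mul, one_mul]; omega
  have hjp2 : j * p ≤ t + p := by rw [hj, add_mul, one_mul]; omega
  have hYlen : (bigY a b w m).length = m * p := length_bigY a b w m
  have hlen2 : t + f.length + v.length = m * p := by
    have hL := congrArg List.length huv
    rw [List.length_append, List.length_append, hYlen] at hL
    omega
  have hjm : j + 1 ≤ m := by
    have hle : (j+1) * p ≤ m * p := by
      have hexp : (j+1)*p = j*p + p := by ring
      omega
    exact Nat.le_of_mul_le_mul_right hle hp0
  have hdropY : (bigY a b w m).drop (j * p) = bigY a b w (m - j) := by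
    conv_lhs => rw [show m = j + (m - j) from by omega]
    rw [bigY_add]
    exact drop_left' (by rw [length_bigY])
  have hQpre : ((bigY a b w m).drop (j * p)).take p = blockQ a b w := by
    rw [hdropY]
    obtain ⟨m', hm'⟩ : ∃ m', m - j = m' + 1 := ⟨m - j - 1, by omega⟩
    rw [hm', bigY_succ]
    exact take_left' (length_blockQ a b w)
  set d := j * p - t with hd
  have hdp : d ≤ p := by omega
  have hdf : d + p ≤ f.length := by omega
  have hfd : (bigY a b w m).drop t = f ++ v := by
    rw [← huv, append_assoc]
    exact drop_left
  have key : blockQ a b w = (f.drop d).take p := by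
    have e0 : f = ((bigY a b w m).drop t).take f.length := by
      rw [hfd]
      exact (take_left' rfl).symm
    have e1 : f.drop d = ((bigY a b w m).drop (j*p)).take (f.length - d) := by
      conv_lhs => rw [e0]
      rw [List.drop_take, List.drop_drop]
      rw [show t + d = j * p from by omega]
    rw [e1, take_take, min_eq_left (by omega : p ≤ f.length - d)]
    exact hQpre.symm
  have h3 : w <:+: blockQ a b w :=
    (w_infix_blockW a b w).trans (prefix_append _ _).isInfix
  refine h3.trans ?_
  rw [key]
  exact ((take_prefix _ _).isInfix).trans ((drop_suffix _ _).isInfix)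

end Extension

section ExtCode
variable {A : Type*}

lemma first_block {X : Set (List A)} {y : List A} :
    ∀ l : List (List A), (∀ x ∈ l, x ∈ insert y X) →
      (∀ x ∈ l, x ∈ X) ∨ ∃ l₀ l₁, l = l₀ ++ y :: l₁ ∧ (∀ x ∈ l₀, x ∈ X) ∧
        (∀ x ∈ l₁, x ∈ insert y X) := by
  intro l
  induction l with
  | nil => intro _; exact Or.inl (by simp)
  | cons x t ih =>
    intro h
    rcases Set.mem_insert_iff.mp (h x (by simp)) with hx | hx
    · subst hx
      exact Or.inr ⟨[], t, rfl, by simp, fun z hz => h z (by simp [hz])⟩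
    · rcases ih (fun z hz => h z (by simp [hz])) with h' | ⟨l₀, l₁, rfl, h1, h2⟩
      · refine Or.inl ?_
        intro z hz
        rcases List.mem_cons.mp hz with rfl | hz
        · exact hx
        · exact h' z hz
      · refine Or.inr ⟨x :: l₀, l₁, rfl, ?_, h2⟩
        intro z hz
        rcases List.mem_cons.mp hz with rfl | hz
        · exact hx
        · exact h1 z hz

lemma shift_zero {X : Set (List A)} {w y : List A}
    (hw : ∀ l : List (List A), (∀ x ∈ l, x ∈ X) → ¬ w <:+: l.flatten)
    (hy2 : ∀ s, 1 ≤ s → s < y.length → y.drop s = y.take (y.length - s) → w <:+: y.take s)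
    (hwy : w <:+: y)
    {l₀ l₁ m₀ m₁ : List (List A)}
    (hl₀ : ∀ x ∈ l₀, x ∈ X) (hm₀ : ∀ x ∈ m₀, x ∈ X)
    (heq : l₀.flatten ++ (y ++ l₁.flatten) = m₀.flatten ++ (y ++ m₁.flatten))
    (hle : l₀.flatten.length ≤ m₀.flatten.length) :
    l₀.flatten.length = m₀.flatten.length := by
  by_contra hne
  have hlt : l₀.flatten.length < m₀.flatten.length := lt_of_le_of_ne hle hne
  have hFM : m₀.flatten = (l₀.flatten ++ (y ++ l₁.flatten)).take m₀.flatten.length := by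
    rw [heq]
    exact (take_left).symm
  rcases Nat.lt_or_ge m₀.flatten.length (l₀.flatten.length + y.length) with hcase | hcase
  · set s := m₀.flatten.length - l₀.flatten.length with hs
    have hs1 : 1 ≤ s := by omega
    have hs2 : s < y.length := by omega
    have hdropL : (l₀.flatten ++ (y ++ l₁.flatten)).drop m₀.flatten.length
        = y.drop s ++ l₁.flatten := by
      rw [drop_append, drop_eq_nil_of_le hle, nil_append]
      exact drop_append_of_le_length (le_of_lt hs2)
    have hdropR : (m₀.flatten ++ (y ++ m₁.flatten)).drop m₀.flatten.length = y ++ m₁.flatten :=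
      drop_left
    have hdeq : y.drop s ++ l₁.flatten = y ++ m₁.flatten := by
      rw [← hdropL, heq, hdropR]
    have hborder : y.drop s = y.take (y.length - s) := by
      have h1 := congrArg (List.take (y.length - s)) hdeq
      rw [take_append_of_le_length (by rw [length_drop] : y.length - s ≤ (y.drop s).length),
          take_of_length_le (by rw [length_drop] : (y.drop s).length ≤ y.length - s),
          take_append_of_le_length (by omega : y.length - s ≤ y.length)] at h1
      exact h1
    have hwts : w <:+: y.take s := hy2 s hs1 hs2 hborder
    have hFM2 : m₀.flatten = l₀.flatten ++ y.take s := by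
      rw [hFM, take_append, take_of_length_le hle,
        take_append_of_le_length (le_of_lt hs2)]
    exact hw m₀ hm₀ (hwts.trans (by rw [hFM2]; exact (suffix_append _ _).isInfix))
  · obtain ⟨s₁, hs₁⟩ : ∃ s₁, m₀.flatten.length = s₁ := ⟨_, rfl⟩
    rw [hs₁] at hFM hcase hle
    have hFM2 : m₀.flatten = l₀.flatten ++ (y ++
        (l₁.flatten.take (s₁ - l₀.flatten.length - y.length))) := by
      rw [hFM, take_append, take_of_length_le hle]
      congr 1
      rw [take_append,
        take_of_length_le (by omega : y.length ≤ s₁ - l₀.flatten.length)]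
    have hyFM : w <:+: m₀.flatten := by
      refine hwy.trans ?_
      exact ⟨l₀.flatten, l₁.flatten.take (s₁ - l₀.flatten.length - y.length),
        by rw [append_assoc, ← hFM2]⟩
    exact hw m₀ hm₀ hyFM

lemma extended_code {X : Set (List A)} {w y : List A} (hcode : IsCode X)
    (hw : ∀ l : List (List A), (∀ x ∈ l, x ∈ X) → ¬ w <:+: l.flatten)
    (hwy : w <:+: y) (hylen : 0 < y.length)
    (hy2 : ∀ s, 1 ≤ s → s < y.length → y.drop s = y.take (y.length - s) → w <:+: y.take s) :
    IsCode (insert y X) := by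
  have main : ∀ n : ℕ, ∀ l m : List (List A), (∀ x ∈ l, x ∈ insert y X) →
      (∀ x ∈ m, x ∈ insert y X) → l.flatten = m.flatten → l.flatten.length ≤ n → l = m := by
    intro n
    induction n using Nat.strong_induction_on with
    | _ n IH =>
    intro l m hl hm heq hlen
    rcases first_block l hl with hlX | ⟨l₀, l₁, rfl, hl₀, hl₁⟩
    · rcases first_block m hm with hmX | ⟨m₀, m₁, rfl, hm₀, hm₁⟩
      · exact hcode l m hlX hmX heq
      · exfalso
        apply hw l hlX
        rw [heq]
        exact hwy.trans (infix_of_mem_flatten (by simp))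
    · rcases first_block m hm with hmX | ⟨m₀, m₁, rfl, hm₀, hm₁⟩
      · exfalso
        apply hw m hmX
        rw [← heq]
        exact hwy.trans (infix_of_mem_flatten (by simp))
      · have heq' : l₀.flatten ++ (y ++ l₁.flatten) = m₀.flatten ++ (y ++ m₁.flatten) := by
          have h1 : (l₀ ++ y :: l₁).flatten = l₀.flatten ++ (y ++ l₁.flatten) := by
            rw [flatten_append, flatten_cons]
          have h2 : (m₀ ++ y :: m₁).flatten = m₀.flatten ++ (y ++ m₁.flatten) := by
            rw [flatten_append, flatten_cons]
          rw [← h1, ← h2, heq]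
        have hs : l₀.flatten.length = m₀.flatten.length := by
          rcases le_total l₀.flatten.length m₀.flatten.length with h | h
          · exact shift_zero hw hy2 hwy hl₀ hm₀ heq' h
          · exact (shift_zero hw hy2 hwy hm₀ hl₀ heq'.symm h).symm
        have hFL : l₀.flatten = m₀.flatten := by
          have h1 := congrArg (List.take l₀.flatten.length) heq'
          rw [take_left, take_append, take_of_length_le (by omega),
              show l₀.flatten.length - m₀.flatten.length = 0 from by omega, take_zero,
              append_nil] at h1
          exact h1
        have h10 : l₀ = m₀ := hcode l₀ m₀ hl₀ hm₀ hFL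
        have hFl1 : l₁.flatten = m₁.flatten := by
          have h1 := congrArg (List.drop (l₀.flatten.length + y.length)) heq'
          rw [show l₀.flatten ++ (y ++ l₁.flatten) = (l₀.flatten ++ y) ++ l₁.flatten from
                (append_assoc _ _ _).symm,
              show m₀.flatten ++ (y ++ m₁.flatten) = (m₀.flatten ++ y) ++ m₁.flatten from
                (append_assoc _ _ _).symm,
              drop_left' (by rw [length_append]),
              drop_left' (by rw [length_append, hs])] at h1
          exact h1
        have hlen1 : l₁.flatten.length < n := by
          have h1 : (l₀ ++ y :: l₁).flatten.length
              = l₀.flatten.length + (y.length + l₁.flatten.length) := by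
            rw [flatten_append, flatten_cons, length_append, length_append]
          omega
        have h11 : l₁ = m₁ := IH l₁.flatten.length hlen1 l₁ m₁ hl₁ hm₁ hFl1 le_rfl
        rw [h10, h11]
  intro l m h1 h2 h3
  exact main l.flatten.length l m h1 h2 h3 le_rfl

lemma exists_extension {a b : A} (hab : a ≠ b) {X : Set (List A)} (hcode : IsCode X)
    (k : ℕ) {w : List A}
    (hw : ∀ l : List (List A), (∀ x ∈ l, x ∈ X) → ¬ w <:+: l.flatten) :
    ∃ y, y ∉ X ∧ IsCode (insert y X) ∧ (∀ x ∈ X, k < dF y x) := by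
  set p := 2*w.length+3 with hp
  set m := k + 4*p + 2 with hm
  set y := bigY a b w m with hy
  have hylen : y.length = m * p := length_bigY a b w m
  have hple : m ≤ m * p := Nat.le_mul_of_pos_right m (by omega)
  have hwy : w <:+: y := by
    refine (w_infix_blockW a b w).trans ?_
    have h1 : y.take (2*w.length+2) = blockW a b w := blockW_prefix_take a b w m (by omega)
    rw [← h1]
    exact (take_prefix _ _).isInfix
  have hbound : ∀ x ∈ X, k < dF y x := by
    intro x hx
    have hlcf : lcfLen y x ≤ 2*p - 1 := by
      apply lcfLen_le
      intro f hfy hfx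
      by_contra hlong
      push_neg at hlong
      have hwf : w <:+: f := bigY_factor a b w m hfy (by omega)
      refine hw [x] (by simpa using hx) ?_
      have : [x].flatten = x := by simp
      rw [this]
      exact hwf.trans hfx
    unfold dF
    omega
  have hymem : y ∉ X := by
    intro hmem
    have h1 := hbound y hmem
    rw [dF_self] at h1
    omega
  exact ⟨y, hymem, extended_code hcode hw hwy (by omega)
    (bigY_border hab w m (by omega)), hbound⟩

end ExtCode

section FinalAux
variable {A : Type*} [Fintype A]

lemma mu_insert (hA : 2 ≤ Fintype.card A) {X : Set (List A)} {y₀ : List A} (hy₀ : y₀ ∉ X) :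
    mu A (insert y₀ X) = ((Fintype.card A : ℝ≥0∞))⁻¹ ^ y₀.length + mu A X := by
  classical
  set f : List A → ℝ≥0∞ := fun w => ((Fintype.card A : ℝ≥0∞))⁻¹ ^ w.length with hf
  have e1 : mu A (insert y₀ X) = ∑' w : List A, (insert y₀ X).indicator f w := by
    unfold mu
    exact tsum_subtype (insert y₀ X) f
  have e2 : mu A X = ∑' w : List A, X.indicator f w := by
    unfold mu
    exact tsum_subtype X f
  have e3 : ∑' w : List A, ({y₀} : Set (List A)).indicator f w = f y₀ := by
    rw [← tsum_subtype]
    exact tsum_singleton y₀ f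
  rw [e1, e2, Set.insert_eq,
    Set.indicator_union_of_disjoint (by simp [Set.disjoint_left, hy₀]) f,
    ENNReal.tsum_add, e3]

lemma mu_mono {X Y : Set (List A)} (h : X ⊆ Y) : mu A X ≤ mu A Y := by
  rw [mu, mu]
  exact ENNReal.tsum_comp_le_tsum_of_injective (Set.inclusion_injective h)
    (fun x : Y => ((Fintype.card A : ℝ≥0∞))⁻¹ ^ (x : List A).length)

lemma mu_one_max (hA : 2 ≤ Fintype.card A) {X : Set (List A)} (hmu : mu A X = 1)
    {Y : Set (List A)} (hYcode : IsCode Y) (hXY : X ⊆ Y) : Y = X := by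
  by_contra hne
  have hns : ¬ Y ⊆ X := fun h => hne (Set.Subset.antisymm h hXY)
  obtain ⟨y₀, hy₀Y, hy₀X⟩ := Set.not_subset.mp hns
  have h1 : mu A (insert y₀ X) ≤ mu A Y := mu_mono (Set.insert_subset hy₀Y hXY)
  have h2 := kraft hA hYcode
  rw [mu_insert hA hy₀X, hmu] at h1
  have h3 : ((Fintype.card A : ℝ≥0∞))⁻¹ ^ y₀.length + 1 ≤ 0 + 1 := by
    rw [zero_add]; exact le_trans h1 h2
  have h4 := (WithTop.add_le_add_iff_right (by simp : (1:ℝ≥0∞) ≠ ⊤)).mp h3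
  have h5 : ((Fintype.card A : ℝ≥0∞))⁻¹ ^ y₀.length ≠ 0 :=
    ENNReal.pow_ne_zero (ENNReal.inv_ne_zero.mpr (ENNReal.natCast_ne_top _)) _
  exact h5 (le_antisymm h4 zero_le)

end FinalAux

lemma chain_list_bound {α : Type*} {c : Set (Set α)} (hchain : IsChain (· ⊆ ·) c)
    (hne : c.Nonempty) :
    ∀ L : List α, (∀ x ∈ L, x ∈ ⋃₀ c) → ∃ Z ∈ c, ∀ x ∈ L, x ∈ Z := by
  intro L
  induction L with
  | nil => intro _; exact ⟨hne.choose, hne.choose_spec, by simp⟩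
  | cons x t ih =>
    intro h
    obtain ⟨Z, hZ, hLZ⟩ := ih (fun z hz => h z (by simp [hz]))
    obtain ⟨Z', hZ', hxZ'⟩ := Set.mem_sUnion.mp (h x (by simp))
    rcases hchain.total hZ hZ' with hsub | hsub
    · refine ⟨Z', hZ', ?_⟩
      intro z hz
      rcases List.mem_cons.mp hz with rfl | hz
      · exact hxZ'
      · exact hsub (hLZ z hz)
    · refine ⟨Z, hZ, ?_⟩
      intro z hz
      rcases List.mem_cons.mp hz with rfl | hz
      · exact hsub hxZ'
      · exact hLZ z hz



/-- for a regular `F̲_k`-independent code `X`, maximality among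
`F̲_k`-independent codes, completeness, and `μ(X) = 1` are pairwise equivalent;
moreover `X` embeds in a maximal `F̲_k`-independent code. -/
theorem stmt_16 {A : Type*} [Fintype A] (hA : 2 ≤ Fintype.card A)
    (k : ℕ) (hk : 1 ≤ k) (X : Set (List A))
    (hreg : IsRegularLang X) (hcode : IsCode X)
    (hind : ¬ ∃ x ∈ X, ∃ y ∈ X, x ≠ y ∧ dF x y ≤ k) :
    (((∀ Y : Set (List A), IsCode Y → (¬ ∃ x ∈ Y, ∃ y ∈ Y, x ≠ y ∧ dF x y ≤ k) →
        X ⊆ Y → Y = X) ↔ IsCompleteSet X) ∧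
      (IsCompleteSet X ↔ mu A X = 1)) ∧
    (∃ Y : Set (List A), X ⊆ Y ∧ IsCode Y ∧
      (¬ ∃ x ∈ Y, ∃ y ∈ Y, x ≠ y ∧ dF x y ≤ k) ∧
      (∀ Z : Set (List A), IsCode Z →
        (¬ ∃ x ∈ Z, ∃ y ∈ Z, x ≠ y ∧ dF x y ≤ k) → Y ⊆ Z → Z = Y)) := by
  classical
  have hcompmu : IsCompleteSet X → mu A X = 1 := complete_mu_eq_one hA hreg hcode
  have hmumax : mu A X = 1 → (∀ Y : Set (List A), IsCode Y →
      (¬ ∃ x ∈ Y, ∃ y ∈ Y, x ≠ y ∧ dF x y ≤ k) → X ⊆ Y → Y = X) :=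
    fun hmu Y hYc _ hXY => mu_one_max hA hmu hYc hXY
  have hmaximp : (∀ Y : Set (List A), IsCode Y →
      (¬ ∃ x ∈ Y, ∃ y ∈ Y, x ≠ y ∧ dF x y ≤ k) → X ⊆ Y → Y = X) → IsCompleteSet X := by
    intro hmax
    by_contra hncomp
    have hex : ∃ w : List A, ∀ l : List (List A), (∀ x ∈ l, x ∈ X) → ¬ w <:+: l.flatten := by
      unfold IsCompleteSet at hncomp
      push_neg at hncomp
      exact hncomp
    obtain ⟨w, hw⟩ := hex
    obtain ⟨a, b, hab⟩ := Fintype.exists_pair_of_one_lt_card (α := A) (by omega)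
    obtain ⟨y, hyX, hycode, hybound⟩ := exists_extension hab hcode k hw
    have hindY : ¬ ∃ x ∈ insert y X, ∃ z ∈ insert y X, x ≠ z ∧ dF x z ≤ k := by
      rintro ⟨x₁, hx₁, x₂, hx₂, hne12, hd⟩
      rcases Set.mem_insert_iff.mp hx₁ with h1 | h1
      · rcases Set.mem_insert_iff.mp hx₂ with h2 | h2
        · exact hne12 (h1.trans h2.symm)
        · have := hybound x₂ h2
          rw [h1] at hd
          omega
      · rcases Set.mem_insert_iff.mp hx₂ with h2 | h2
        · have := hybound x₁ h1
          rw [h2, dF_comm] at hd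
          omega
        · exact hind ⟨x₁, h1, x₂, h2, hne12, hd⟩
    have hYX := hmax (insert y X) hycode hindY (Set.subset_insert _ _)
    exact hyX (hYX ▸ Set.mem_insert y X)
  refine ⟨⟨⟨fun hmax => hmaximp hmax,
      fun hcomp => hmumax (hcompmu hcomp)⟩,
      ⟨hcompmu, fun hmu => hmaximp (hmumax hmu)⟩⟩, ?_⟩
  set S : Set (Set (List A)) :=
    {Y | IsCode Y ∧ (¬ ∃ x ∈ Y, ∃ z ∈ Y, x ≠ z ∧ dF x z ≤ k) ∧ X ⊆ Y} with hS
  have hchain : ∀ c ⊆ S, IsChain (· ⊆ ·) c → c.Nonempty →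
      ∃ ub ∈ S, ∀ s ∈ c, s ⊆ ub := by
    intro c hcS hch hcne
    refine ⟨⋃₀ c, ⟨?_, ?_, ?_⟩, fun s hs => Set.subset_sUnion_of_mem hs⟩
    · intro l m hl hm heq
      obtain ⟨Z, hZ, hall⟩ := chain_list_bound hch hcne (l ++ m) (by
        intro x hx
        rcases List.mem_append.mp hx with hx | hx
        · exact hl x hx
        · exact hm x hx)
      exact (hcS hZ).1 l m (fun x hx => hall x (List.mem_append_left _ hx))
        (fun x hx => hall x (List.mem_append_right _ hx)) heq
    · rintro ⟨x₁, hx₁, x₂, hx₂, hne12, hd⟩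
      obtain ⟨Z₁, hZ₁, hxZ₁⟩ := Set.mem_sUnion.mp hx₁
      obtain ⟨Z₂, hZ₂, hxZ₂⟩ := Set.mem_sUnion.mp hx₂
      rcases hch.total hZ₁ hZ₂ with hsub | hsub
      · exact (hcS hZ₂).2.1 ⟨x₁, hsub hxZ₁, x₂, hxZ₂, hne12, hd⟩
      · exact (hcS hZ₁).2.1 ⟨x₁, hxZ₁, x₂, hsub hxZ₂, hne12, hd⟩
    · obtain ⟨Z, hZ⟩ := hcne
      exact Set.Subset.trans (hcS hZ).2.2 (Set.subset_sUnion_of_mem hZ)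
  obtain ⟨Ymax, hXYmax, hmaxl⟩ := zorn_subset_nonempty S hchain X ⟨hcode, hind, subset_rfl⟩
  refine ⟨Ymax, hXYmax, hmaxl.1.1, hmaxl.1.2.1, ?_⟩
  intro Z hZc hZi hYZ
  have hZS : Z ∈ S := ⟨hZc, hZi, hXYmax.trans hYZ⟩
  exact Set.Subset.antisymm (hmaxl.2 hZS hYZ) hYZ
end

section
/- Let A be a finite alphabet with |A| ≥ 2, let σ be a permutation of A, and let θ : A* → A* be either the monoid automorphism extending σ (θ(a_1⋯a_n) = σ(a_1)⋯σ(a_n)) or the anti-automorphism extending σ (θ(a_1⋯a_n) = σ(a_n)⋯σ(a_1)). Every regular θ̲-independent code X ⊆ A* can be embedded into a complete code Z ⊇ X that is still θ̲-independent (and may be taken regular). -/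
open scoped ENNReal

namespace St18

open Classical

variable {A : Type*}

/-- concatenation of languages -/
def Lcat (L₁ L₂ : Set (List A)) : Set (List A) :=
  {w | ∃ u v, u ∈ L₁ ∧ v ∈ L₂ ∧ w = u ++ v}

/-- star of a language -/
def Lstar (L : Set (List A)) : Set (List A) :=
  {w | ∃ l : List (List A), (∀ x ∈ l, x ∈ L) ∧ l.flatten = w}

theorem reg_compl {L : Set (List A)} (h : IsRegularLang L) : IsRegularLang Lᶜ := by
  obtain ⟨Q, fQ, M, hM⟩ := h
  refine ⟨Q, fQ, ⟨M.step, M.start, M.acceptᶜ⟩, ?_⟩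
  ext w
  have : (⟨M.step, M.start, M.acceptᶜ⟩ : DFA A Q).eval w = M.eval w := rfl
  rw [← hM]
  simp only [Set.mem_compl_iff, DFA.mem_accepts, this]
  tauto

theorem reg_union {L₁ L₂ : Set (List A)} (h₁ : IsRegularLang L₁) (h₂ : IsRegularLang L₂) :
    IsRegularLang (L₁ ∪ L₂) := by
  obtain ⟨Q₁, f₁, M₁, hM₁⟩ := h₁
  obtain ⟨Q₂, f₂, M₂, hM₂⟩ := h₂
  refine ⟨Q₁ × Q₂, inferInstance,
    ⟨fun p a => (M₁.step p.1 a, M₂.step p.2 a), (M₁.start, M₂.start),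
      {p | p.1 ∈ M₁.accept ∨ p.2 ∈ M₂.accept}⟩, ?_⟩
  set M : DFA A (Q₁ × Q₂) := ⟨fun p a => (M₁.step p.1 a, M₂.step p.2 a), (M₁.start, M₂.start),
      {p | p.1 ∈ M₁.accept ∨ p.2 ∈ M₂.accept}⟩
  have key : ∀ (w : List A) (p : Q₁ × Q₂),
      M.evalFrom p w = (M₁.evalFrom p.1 w, M₂.evalFrom p.2 w) := by
    intro w
    induction w with
    | nil => intro p; simp [DFA.evalFrom]
    | cons a w ih =>
      intro p
      show M.evalFrom (M.step p a) w = _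
      rw [ih]
      rfl
  ext w
  rw [← hM₁, ← hM₂]
  simp only [DFA.mem_accepts, DFA.eval]
  rw [key]
  rfl

theorem reg_inter {L₁ L₂ : Set (List A)} (h₁ : IsRegularLang L₁) (h₂ : IsRegularLang L₂) :
    IsRegularLang (L₁ ∩ L₂) := by
  have := reg_union (reg_compl h₁) (reg_compl h₂)
  have h := reg_compl this
  rwa [Set.compl_union, compl_compl, compl_compl] at h

theorem reg_univ : IsRegularLang (Set.univ : Set (List A)) :=
  ⟨Unit, inferInstance, ⟨fun _ _ => (), (), Set.univ⟩, by
    ext w; simp [DFA.mem_accepts]; trivial⟩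

theorem reg_epsilon : IsRegularLang ({[]} : Set (List A)) := by
  refine ⟨Bool, inferInstance, ⟨fun _ _ => false, true, {true}⟩, ?_⟩
  set M : DFA A Bool := ⟨fun _ _ => false, true, {true}⟩
  have key : ∀ (w : List A), M.evalFrom false w = false := by
    intro w; induction w with
    | nil => rfl
    | cons a w ih => exact ih
  ext w
  simp only [DFA.mem_accepts, DFA.eval]
  cases w with
  | nil => exact ⟨fun _ => rfl, fun _ => rfl⟩
  | cons a w =>
    show M.evalFrom (M.step true a) w ∈ _ ↔ _
    have : M.step true a = false := rfl
    rw [this, key]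
    show false ∈ ({true} : Set Bool) ↔ a :: w = []
    constructor
    · intro h; exact absurd h (by simp)
    · intro h; cases h

end St18

namespace St18x
open St18

theorem split_last {A : Type*} {w u v : List A} {a : A} (h : w ++ [a] = u ++ v) :
    (v = [] ∧ u = w ++ [a]) ∨ ∃ v', v = v' ++ [a] ∧ w = u ++ v' := by
  rcases v.eq_nil_or_concat with rfl | ⟨v', c, rfl⟩
  · left; exact ⟨rfl, by simpa using h.symm⟩
  · right
    rw [List.concat_eq_append] at h
    have h2 : w ++ [a] = (u ++ v') ++ [c] := by rw [h, List.append_assoc]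
    have := List.append_inj' h2 rfl
    obtain ⟨h3, h4⟩ := this
    have hac : a = c := by simpa using h4
    exact ⟨v', by rw [List.concat_eq_append, hac], h3⟩

theorem reg_cat {A : Type*} {L₁ L₂ : Set (List A)} (h₁ : IsRegularLang L₁)
    (h₂ : IsRegularLang L₂) : IsRegularLang (Lcat L₁ L₂) := by
  classical
  obtain ⟨Q₁, f₁, M₁, rfl⟩ := h₁
  obtain ⟨Q₂, f₂, M₂, rfl⟩ := h₂
  haveI : Fintype (Set Q₂) := Fintype.ofFinite _
  refine ⟨Q₁ × Set Q₂, inferInstance,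
    ⟨fun p a => (M₁.step p.1 a,
        (fun q => M₂.step q a) '' p.2 ∪ (if M₁.step p.1 a ∈ M₁.accept then {M₂.start} else ∅)),
      (M₁.start, if M₁.start ∈ M₁.accept then {M₂.start} else ∅),
      {p | ∃ q ∈ p.2, q ∈ M₂.accept}⟩, ?_⟩
  set M : DFA A (Q₁ × Set Q₂) :=
    ⟨fun p a => (M₁.step p.1 a,
        (fun q => M₂.step q a) '' p.2 ∪ (if M₁.step p.1 a ∈ M₁.accept then {M₂.start} else ∅)),
      (M₁.start, if M₁.start ∈ M₁.accept then {M₂.start} else ∅),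
      {p | ∃ q ∈ p.2, q ∈ M₂.accept}⟩ with hMdef
  have key : ∀ w : List A, M.eval w =
      (M₁.eval w, {q | ∃ u v, u ∈ M₁.accepts ∧ w = u ++ v ∧ q = M₂.evalFrom M₂.start v}) := by
    intro w
    induction w using List.reverseRecOn with
    | nil =>
      show M.start = _
      have : M₁.eval ([] : List A) = M₁.start := rfl
      rw [hMdef]
      refine Prod.ext rfl ?_
      show (if M₁.start ∈ M₁.accept then {M₂.start} else ∅) = _
      ext q
      constructor
      · intro hq
        by_cases hs : M₁.start ∈ M₁.accept
        · rw [if_pos hs] at hq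
          have : q = M₂.start := by simpa using hq
          exact ⟨[], [], by rwa [DFA.mem_accepts], rfl, by rw [this]; rfl⟩
        · rw [if_neg hs] at hq; exact absurd hq (Set.notMem_empty q)
      · rintro ⟨u, v, hu, huv, rfl⟩
        have hu0 : u = [] := by
          rcases u with _ | ⟨c, u⟩
          · rfl
          · exact absurd huv (by simp)
        subst hu0
        have hv0 : v = [] := by simpa using huv
        subst hv0
        rw [DFA.mem_accepts] at hu
        have hu' : M₁.start ∈ M₁.accept := hu
        rw [if_pos hu']
        rfl
    | append_singleton w a ih =>
      have e1 : M.eval (w ++ [a]) = M.step (M.eval w) a :=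
        DFA.evalFrom_append_singleton _ _ _ _
      have e2 : M₁.eval (w ++ [a]) = M₁.step (M₁.eval w) a :=
        DFA.evalFrom_append_singleton _ _ _ _
      rw [e1, ih, e2]
      refine Prod.ext rfl ?_
      show ((fun q => M₂.step q a) ''
          {q | ∃ u v, u ∈ M₁.accepts ∧ w = u ++ v ∧ q = M₂.evalFrom M₂.start v}) ∪
          (if M₁.step (M₁.eval w) a ∈ M₁.accept then {M₂.start} else ∅) = _
      ext q
      simp only [Set.mem_union, Set.mem_image, Set.mem_setOf_eq]
      constructor
      · rintro (⟨q', ⟨u, v, hu, huv, rfl⟩, rfl⟩ | hq)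
        · exact ⟨u, v ++ [a], hu, by rw [huv, List.append_assoc],
            (DFA.evalFrom_append_singleton _ _ _ _).symm⟩
        · by_cases hs : M₁.step (M₁.eval w) a ∈ M₁.accept
          · rw [if_pos hs] at hq
            have hq' : q = M₂.start := by simpa using hq
            refine ⟨w ++ [a], [], ?_, (List.append_nil _).symm, hq'⟩
            rw [DFA.mem_accepts, e2]
            exact hs
          · rw [if_neg hs] at hq; exact absurd hq (Set.notMem_empty q)
      · rintro ⟨u, v, hu, huv, rfl⟩
        rcases split_last huv with ⟨rfl, rfl⟩ | ⟨v', rfl, rfl⟩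
        · right
          rw [DFA.mem_accepts] at hu
          rw [e2] at hu
          rw [if_pos hu]
          rfl
        · left
          exact ⟨M₂.evalFrom M₂.start v', ⟨u, v', hu, rfl, rfl⟩,
            (DFA.evalFrom_append_singleton _ _ _ _).symm⟩
  ext w
  rw [DFA.mem_accepts]
  show M.eval w ∈ M.accept ↔ _
  rw [key]
  constructor
  · rintro ⟨q, ⟨u, v, hu, huv, rfl⟩, hacc⟩
    exact ⟨u, v, hu, hacc, huv⟩
  · rintro ⟨u, v, hu, hv, rfl⟩
    exact ⟨M₂.evalFrom M₂.start v, ⟨u, v, hu, rfl, rfl⟩, hv⟩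

end St18x

namespace St18
open St18x

theorem Lstar_nil {A : Type*} {L : Set (List A)} : ([] : List A) ∈ Lstar L :=
  ⟨[], by simp, rfl⟩

theorem Lstar_append_chunk {A : Type*} {L : Set (List A)} {u z : List A}
    (hu : u ∈ Lstar L) (hz : z ∈ L) : u ++ z ∈ Lstar L := by
  obtain ⟨l, hl, rfl⟩ := hu
  exact ⟨l ++ [z], by
    intro x hx
    rcases List.mem_append.1 hx with h | h
    · exact hl x h
    · rw [List.mem_singleton] at h; subst h; exact hz, by simp⟩

theorem Lstar_last_chunk {A : Type*} {L : Set (List A)} (hL : ∀ x ∈ L, x ≠ [])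
    {v : List A} (hv : v ∈ Lstar L) (hne : v ≠ []) :
    ∃ u z, u ∈ Lstar L ∧ z ∈ L ∧ z ≠ [] ∧ v = u ++ z := by
  obtain ⟨l, hl, rfl⟩ := hv
  rcases l.eq_nil_or_concat with rfl | ⟨l', z, rfl⟩
  · exact absurd rfl hne
  · have hz : z ∈ L := hl z (by simp)
    refine ⟨l'.flatten, z, ⟨l', fun x hx => hl x (by simp [hx]), rfl⟩, hz, hL z hz, by simp⟩

theorem reg_catstar {A : Type*} {L : Set (List A)} (h : IsRegularLang L)
    (hfree : ∀ x ∈ L, x ≠ []) : IsRegularLang (Lcat (Lstar L) L) := by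
  classical
  obtain ⟨Q, fQ, M, rfl⟩ := h
  haveI : Fintype (Set Q) := Fintype.ofFinite _
  refine ⟨Set Q, inferInstance,
    ⟨fun S a => (fun q => M.step q a) '' S ∪
        (if ∃ q ∈ S, M.step q a ∈ M.accept then {M.start} else ∅),
      {M.start}, {S | ∃ q ∈ S, q ∈ M.accept}⟩, ?_⟩
  set N : DFA A (Set Q) :=
    ⟨fun S a => (fun q => M.step q a) '' S ∪
        (if ∃ q ∈ S, M.step q a ∈ M.accept then {M.start} else ∅),
      {M.start}, {S | ∃ q ∈ S, q ∈ M.accept}⟩ with hNdef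
  have key : ∀ w : List A, N.eval w =
      {q | ∃ u v, u ∈ Lstar M.accepts ∧ w = u ++ v ∧ q = M.evalFrom M.start v} := by
    intro w
    induction w using List.reverseRecOn with
    | nil =>
      show ({M.start} : Set Q) = _
      ext q
      simp only [Set.mem_singleton_iff, Set.mem_setOf_eq]
      constructor
      · rintro rfl; exact ⟨[], [], Lstar_nil, rfl, rfl⟩
      · rintro ⟨u, v, hu, huv, rfl⟩
        have hu0 : u = [] := by
          rcases u with _ | ⟨c, u⟩
          · rfl
          · exact absurd huv (by simp)
        subst hu0
        have hv0 : v = [] := by simpa using huv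
        subst hv0
        rfl
    | append_singleton w a ih =>
      have e1 : N.eval (w ++ [a]) = N.step (N.eval w) a :=
        DFA.evalFrom_append_singleton _ _ _ _
      rw [e1, ih]
      show ((fun q => M.step q a) '' _) ∪ _ = _
      ext q
      simp only [Set.mem_union, Set.mem_image, Set.mem_setOf_eq]
      constructor
      · rintro (⟨q', ⟨u, v, hu, huv, rfl⟩, rfl⟩ | hq)
        · exact ⟨u, v ++ [a], hu, by rw [huv, List.append_assoc],
            (DFA.evalFrom_append_singleton _ _ _ _).symm⟩
        · by_cases hc : ∃ q', (∃ u v, u ∈ Lstar M.accepts ∧ w = u ++ v ∧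
              q' = M.evalFrom M.start v) ∧ M.step q' a ∈ M.accept
          · rw [if_pos hc] at hq
            have hq' : q = M.start := by simpa using hq
            obtain ⟨q', ⟨u, v, hu, huv, hq'eq⟩, hacc⟩ := hc
            subst hq'eq
            have hvL : v ++ [a] ∈ M.accepts := by
              rw [DFA.mem_accepts]
              show M.evalFrom M.start (v ++ [a]) ∈ M.accept
              rw [DFA.evalFrom_append_singleton]
              exact hacc
            refine ⟨w ++ [a], [], ?_, (List.append_nil _).symm, by rw [hq']; rfl⟩
            rw [huv, List.append_assoc]
            exact Lstar_append_chunk hu hvL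
          · rw [if_neg hc] at hq; exact absurd hq (Set.notMem_empty q)
      · rintro ⟨u, v, hu, huv, rfl⟩
        rcases split_last huv with ⟨rfl, rfl⟩ | ⟨v', rfl, rfl⟩
        · right
          have hne : w ++ [a] ≠ [] := by simp
          obtain ⟨u', z, hu', hz, hzne, heq⟩ := Lstar_last_chunk hfree hu hne
          obtain ⟨z', c, rfl⟩ : ∃ z' c, z = z' ++ [c] := by
            rcases z.eq_nil_or_concat with rfl | ⟨z', c, rfl⟩
            · exact absurd rfl hzne
            · exact ⟨z', c, by rw [List.concat_eq_append]⟩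
          have h2 : w ++ [a] = (u' ++ z') ++ [c] := by rw [heq, List.append_assoc]
          obtain ⟨h3, h4⟩ := List.append_inj' h2 rfl
          have hac : a = c := by simpa using h4
          subst hac
          have hcond : ∃ q', (∃ u v, u ∈ Lstar M.accepts ∧ w = u ++ v ∧
              q' = M.evalFrom M.start v) ∧ M.step q' a ∈ M.accept := by
            refine ⟨M.evalFrom M.start z', ⟨u', z', hu', h3, rfl⟩, ?_⟩
            have h5 : M.evalFrom M.start (z' ++ [a]) ∈ M.accept := hz
            rwa [DFA.evalFrom_append_singleton] at h5
          rw [if_pos hcond]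
          show M.evalFrom M.start [] ∈ ({M.start} : Set Q)
          rfl
        · left
          exact ⟨M.evalFrom M.start v', ⟨u, v', hu, rfl, rfl⟩,
            (DFA.evalFrom_append_singleton _ _ _ _).symm⟩
  ext w
  rw [DFA.mem_accepts]
  show N.eval w ∈ N.accept ↔ _
  rw [key]
  constructor
  · rintro ⟨q, ⟨u, v, hu, huv, rfl⟩, hacc⟩
    exact ⟨u, v, hu, hacc, huv⟩
  · rintro ⟨u, v, hu, hv, rfl⟩
    exact ⟨M.evalFrom M.start v, ⟨u, v, hu, rfl, rfl⟩, hv⟩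

theorem reg_Lstar {A : Type*} {L : Set (List A)} (h : IsRegularLang L)
    (hfree : ∀ x ∈ L, x ≠ []) : IsRegularLang (Lstar L) := by
  have hu : Lstar L = {([] : List A)} ∪ Lcat (Lstar L) L := by
    ext w
    constructor
    · intro hw
      by_cases hne : w = []
      · left; simp [hne]
      · right
        obtain ⟨u, z, hu, hz, _, rfl⟩ := Lstar_last_chunk hfree hw hne
        exact ⟨u, z, hu, hz, rfl⟩
    · rintro (hw | ⟨u, z, hu, hz, rfl⟩)
      · simp only [Set.mem_singleton_iff] at hw
        subst hw; exact Lstar_nil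
      · exact Lstar_append_chunk hu hz
  rw [hu]
  exact reg_union reg_epsilon (reg_catstar h hfree)

end St18

namespace St18

theorem reg_letter {A : Type*} (c : A) : IsRegularLang ({[c]} : Set (List A)) := by
  classical
  refine ⟨Fin 3, inferInstance,
    ⟨fun q a => if q = 0 ∧ a = c then 1 else 2, 0, {1}⟩, ?_⟩
  set M : DFA A (Fin 3) := ⟨fun q a => if q = 0 ∧ a = c then 1 else 2, 0, {1}⟩ with hM
  have dead : ∀ (w : List A) (q : Fin 3), q ≠ 0 → M.evalFrom q w ≠ 0 ∧
      (q ≠ 1 → M.evalFrom q w ≠ 1) := by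
    intro w
    induction w with
    | nil => intro q hq; exact ⟨hq, fun h => h⟩
    | cons a w ih =>
      intro q hq
      have hstep : M.step q a = 2 := by
        show (if q = 0 ∧ a = c then (1 : Fin 3) else 2) = 2
        rw [if_neg]; rintro ⟨h1, _⟩; exact hq h1
      constructor
      · show M.evalFrom (M.step q a) w ≠ 0
        rw [hstep]; exact (ih 2 (by decide)).1
      · intro _
        show M.evalFrom (M.step q a) w ≠ 1
        rw [hstep]; exact (ih 2 (by decide)).2 (by decide)
  ext w
  rw [DFA.mem_accepts]
  show M.eval w ∈ M.accept ↔ w = [c]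
  cases w with
  | nil =>
    constructor
    · intro h; exact absurd (show (0:Fin 3) ∈ ({1} : Set (Fin 3)) from h) (by simp)
    · intro h; cases h
  | cons a w =>
    have : M.eval (a :: w) = M.evalFrom (M.step 0 a) w := rfl
    rw [this]
    by_cases hac : a = c
    · have hstep : M.step 0 a = 1 := by
        show (if (0:Fin 3) = 0 ∧ a = c then (1:Fin 3) else 2) = 1
        rw [if_pos ⟨rfl, hac⟩]
      rw [hstep]
      cases w with
      | nil =>
        constructor
        · intro _; show [a] ∈ ({[c]} : Set (List A)); rw [hac]; exact rfl
        · intro _; exact rfl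
      | cons b w =>
        constructor
        · intro h
          have h1 : M.evalFrom 1 (b::w) = 1 := h
          have h2 : M.evalFrom 1 (b::w) = M.evalFrom (M.step 1 b) w := rfl
          have h3 : M.step 1 b = 2 := by
            show (if (1:Fin 3) = 0 ∧ b = c then (1:Fin 3) else 2) = 2
            rw [if_neg]; rintro ⟨h4, _⟩; exact absurd h4 (by decide)
          rw [h2, h3] at h1
          exact absurd h1 ((dead w 2 (by decide)).2 (by decide))
        · intro h
          have h' : a :: b :: w = [c] := h
          injection h' with h1 h2
          exact absurd h2 (by simp)
    · have hstep : M.step 0 a = 2 := by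
        show (if (0:Fin 3) = 0 ∧ a = c then (1:Fin 3) else 2) = 2
        rw [if_neg]; rintro ⟨_, h⟩; exact hac h
      rw [hstep]
      constructor
      · intro h
        exact absurd (show M.evalFrom 2 w = 1 from h) ((dead w 2 (by decide)).2 (by decide))
      · intro h
        have h' : a :: w = [c] := h
        have : a = c := by injection h'
        exact absurd this hac

theorem Lcat_letter {A : Type*} (c : A) (t : List A) :
    ({c :: t} : Set (List A)) = Lcat {[c]} {t} := by
  ext w
  simp only [Lcat, Set.mem_setOf_eq, Set.mem_singleton_iff]
  constructor
  · rintro rfl; exact ⟨[c], t, rfl, rfl, rfl⟩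
  · rintro ⟨u, v, hu, hv, rfl⟩
    have hu' : u = [c] := hu
    have hv' : v = t := hv
    rw [hu', hv']; rfl

theorem reg_word {A : Type*} (y : List A) : IsRegularLang ({y} : Set (List A)) := by
  induction y with
  | nil => exact reg_epsilon
  | cons c t ih =>
    rw [Lcat_letter]
    exact St18x.reg_cat (reg_letter c) ih

end St18




namespace St18



def Unbordered {A : Type*} (y : List A) : Prop :=
  ∀ t, t <+: y → t <:+ y → t = [] ∨ t = y

def Ffac {A : Type*} (X : Set (List A)) : Set (List A) :=
  {v | ∃ l : List (List A), (∀ x ∈ l, x ∈ X) ∧ v <:+: l.flatten}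

def Uset {A : Type*} (X : Set (List A)) (y : List A) : Set (List A) :=
  {u | u ∉ Lstar X ∧ ¬ y <:+: u}

def Nw {A : Type*} (y : List A) (us : List (List A)) : List A :=
  y ++ (us.map (· ++ y)).flatten

def Nset {A : Type*} (X : Set (List A)) (y : List A) : Set (List A) :=
  {v | ∃ us : List (List A), (∀ u ∈ us, u ∈ Uset X y) ∧ v = Nw y us}

def Zset {A : Type*} (X : Set (List A)) (y : List A) : Set (List A) :=
  X ∪ Nset X y

section Core

variable {A : Type*} {X : Set (List A)} {y : List A}

theorem nil_not_mem_X (hcode : IsCode X) : ([] : List A) ∉ X := by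
  intro h
  have := hcode [[]] [] (by intro x hx; simp at hx; rw [hx]; exact h) (by intro x hx; simp at hx)
    (by simp)
  simp at this

theorem mem_Ffac_of_infix {u v : List A} (h : u <:+: v) (hv : v ∈ Ffac X) : u ∈ Ffac X := by
  obtain ⟨l, hl, hinf⟩ := hv
  exact ⟨l, hl, h.trans hinf⟩

theorem Lstar_sub_Ffac {v : List A} (h : v ∈ Lstar X) : v ∈ Ffac X := by
  obtain ⟨l, hl, rfl⟩ := h
  exact ⟨l, hl, List.infix_rfl⟩

theorem X_sub_Ffac {v : List A} (h : v ∈ X) : v ∈ Ffac X :=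
  Lstar_sub_Ffac ⟨[v], by simp [h], by simp⟩

theorem yfree_of_Lstar (hyF : y ∉ Ffac X) {v : List A} (h : v ∈ Lstar X) : ¬ y <:+: v :=
  fun hinf => hyF (mem_Ffac_of_infix hinf (Lstar_sub_Ffac h))

theorem Nw_cons (u : List A) (us : List (List A)) :
    Nw y (u :: us) = (y ++ u) ++ Nw y us := by
  simp [Nw]

theorem y_prefix_Nw (us : List (List A)) : y <+: Nw y us := ⟨_, rfl⟩

theorem y_suffix_Nw (us : List (List A)) : y <:+ Nw y us := by
  induction us with
  | nil => simp [Nw]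
  | cons u us ih => rw [Nw_cons]; exact ih.trans (List.suffix_append _ _)

theorem Nw_ne_nil (hy : y ≠ []) (us : List (List A)) : Nw y us ≠ [] := by
  intro h
  have := y_prefix_Nw (y := y) us
  rw [h] at this
  exact hy (List.prefix_nil.1 this)

theorem y_infix_of_mem_N (hz : ∃ us, (∀ u ∈ us, u ∈ Uset X y) ∧ z = Nw y us) : y <:+: z := by
  obtain ⟨us, _, rfl⟩ := hz
  exact (y_prefix_Nw us).isInfix

theorem X_N_disjoint (hyF : y ∉ Ffac X) {z : List A} (hzX : z ∈ X) (hzN : z ∈ Nset X y) :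
    False := by
  obtain ⟨us, _, rfl⟩ := hzN
  exact hyF (mem_Ffac_of_infix (y_prefix_Nw us).isInfix (X_sub_Ffac hzX))

theorem Z_ne_nil (hcode : IsCode X) (hy : y ≠ []) {z : List A} (hz : z ∈ Zset X y) : z ≠ [] := by
  rcases hz with hz | ⟨us, _, rfl⟩
  · intro h; rw [h] at hz; exact nil_not_mem_X hcode hz
  · exact Nw_ne_nil hy us

/-- the key overlap lemma: two occurrences of an unbordered word at distance `< |y|` coincide. -/
theorem headeq_le (hy : y ≠ []) (hunb : Unbordered y) {g h r s : List A}
    (hh : ¬ y <:+: h) (heq : g ++ (y ++ r) = h ++ (y ++ s)) (hle : g.length ≤ h.length) :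
    g = h := by
  have hgpre : g <+: h := by
    have h1 : g <+: h ++ (y ++ s) := by rw [← heq]; exact ⟨y ++ r, rfl⟩
    have h2 : h <+: h ++ (y ++ s) := ⟨y ++ s, rfl⟩
    exact List.prefix_of_prefix_length_le h1 h2 hle
  obtain ⟨s₀, rfl⟩ := hgpre
  rcases eq_or_ne s₀ [] with rfl | hs₀
  · simp
  exfalso
  rw [List.append_assoc] at heq
  have heq2 : y ++ r = s₀ ++ (y ++ s) := by
    exact List.append_cancel_left heq
  by_cases hlen : y.length ≤ s₀.length
  · -- y is a prefix of s₀, hence infix of h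
    have : y <+: s₀ := by
      have h1 : y <+: s₀ ++ (y ++ s) := by rw [← heq2]; exact ⟨r, rfl⟩
      exact List.prefix_of_prefix_length_le h1 ⟨y ++ s, rfl⟩ hlen
    obtain ⟨t, rfl⟩ := this
    exact hh ⟨g, t, by simp⟩
  · push_neg at hlen
    -- border: t := y.take (y.length - s₀.length)
    have htake : y = s₀ ++ y.take (y.length - s₀.length) := by
      have h1 : (y ++ r).take y.length = y := by
        rw [List.take_append, List.take_length, Nat.sub_self,
          List.take_zero, List.append_nil]
      have h2 : (s₀ ++ (y ++ s)).take y.length =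
          s₀ ++ (y ++ s).take (y.length - s₀.length) := by
        rw [List.take_append, List.take_of_length_le (le_of_lt hlen)]
      have h3 : (y ++ s).take (y.length - s₀.length) = y.take (y.length - s₀.length) := by
        rw [List.take_append]
        have : y.length - s₀.length - y.length = 0 := by omega
        rw [this, List.take_zero, List.append_nil]
      rw [heq2] at h1
      rw [h1, h3] at h2
      exact h2
    set t := y.take (y.length - s₀.length) with ht
    have htpre : t <+: y := List.take_prefix _ _
    have htsuf : t <:+ y := by
      refine ⟨s₀, ?_⟩
      exact htake.symm
    rcases hunb t htpre htsuf with h0 | h0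
    · have : t.length = 0 := by rw [h0]; rfl
      rw [ht] at this
      simp at this
      omega
    · have : t.length = y.length := by rw [h0]
      rw [ht] at this
      simp at this
      have hs0len : s₀.length ≠ 0 := fun hh0 => hs₀ (List.eq_nil_of_length_eq_zero hh0)
      omega

theorem headeq (hy : y ≠ []) (hunb : Unbordered y) {g h r s : List A}
    (hg : ¬ y <:+: g) (hh : ¬ y <:+: h) (heq : g ++ (y ++ r) = h ++ (y ++ s)) :
    g = h := by
  rcases le_total g.length h.length with hle | hle
  · exact headeq_le hy hunb hh heq hle
  · exact (headeq_le hy hunb hg heq.symm hle).symm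

end Core

end St18

namespace St18

section Core2

variable {A : Type*} {X : Set (List A)} {y : List A}

/-- Synchronization: decompositions by `y`-separators with `y`-free gaps are unique. -/
theorem sync (hy : y ≠ []) (hunb : Unbordered y) :
    ∀ (gs : List (List A)) (g : List A) (hs : List (List A)) (h : List A),
      (¬ y <:+: g) → (∀ c ∈ gs, ¬ y <:+: c) → (¬ y <:+: h) → (∀ c ∈ hs, ¬ y <:+: c) →
      g ++ (gs.map (y ++ ·)).flatten = h ++ (hs.map (y ++ ·)).flatten →
      g = h ∧ gs = hs := by
  intro gs
  induction gs with
  | nil =>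
    intro g hs h hg _ hh hhs heq
    cases hs with
    | nil => simpa using heq
    | cons d hs =>
      exfalso
      simp only [List.map_nil, List.flatten_nil, List.append_nil, List.map_cons,
        List.flatten_cons] at heq
      exact hg ⟨h, (d ++ (hs.map (y ++ ·)).flatten), by rw [heq]; simp⟩
  | cons c gs ih =>
    intro g hs h hg hgs hh hhs heq
    cases hs with
    | nil =>
      exfalso
      simp only [List.map_nil, List.flatten_nil, List.append_nil, List.map_cons,
        List.flatten_cons] at heq
      exact hh ⟨g, (c ++ (gs.map (y ++ ·)).flatten), by rw [← heq]; simp⟩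
    | cons d hs =>
      simp only [List.map_cons, List.flatten_cons] at heq
      simp only [List.append_assoc] at heq
      have hgh : g = h := headeq hy hunb hg hh heq
      subst hgh
      have heq2 : c ++ (gs.map (y ++ ·)).flatten = d ++ (hs.map (y ++ ·)).flatten := by
        have h1 := List.append_cancel_left heq
        exact List.append_cancel_left h1
      obtain ⟨hcd, hgshs⟩ := ih c hs d (hgs c (by simp)) (fun x hx => hgs x (by simp [hx]))
        (hhs d (by simp)) (fun x hx => hhs x (by simp [hx])) heq2
      exact ⟨rfl, by rw [hcd, hgshs]⟩

open Classical in
/-- gap structure of a factorization over `Zset X y`. -/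
noncomputable def Gp (X : Set (List A)) (y : List A) : List (List A) → List A × List (List A)
  | [] => ([], [])
  | z :: l =>
    if h : z ∈ Nset X y then
      ([], Classical.choose h ++ ((Gp X y l).1 :: (Gp X y l).2))
    else
      (z ++ (Gp X y l).1, (Gp X y l).2)

theorem Gp_nil : Gp X y [] = ([], []) := by rfl

open Classical in
theorem Gp_cons_N {z : List A} (h : z ∈ Nset X y) (l : List (List A)) :
    ∃ us, (∀ u ∈ us, u ∈ Uset X y) ∧ z = Nw y us ∧
      Gp X y (z :: l) = ([], us ++ ((Gp X y l).1 :: (Gp X y l).2)) := by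
  refine ⟨Classical.choose h, (Classical.choose_spec h).1, (Classical.choose_spec h).2, ?_⟩
  simp only [Gp, dif_pos h]

open Classical in
theorem Gp_cons_X {z : List A} (h : z ∉ Nset X y) (l : List (List A)) :
    Gp X y (z :: l) = (z ++ (Gp X y l).1, (Gp X y l).2) := by
  simp only [Gp, dif_neg h]

theorem shift_lemma (y : List A) (us : List (List A)) :
    (us.map (y ++ ·)).flatten ++ y = y ++ (us.map (· ++ y)).flatten := by
  induction us with
  | nil => simp
  | cons u us ih => simp only [List.map_cons, List.flatten_cons, List.append_assoc, ih]

theorem Gp_word : ∀ l : List (List A), (∀ z ∈ l, z ∈ Zset X y) →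
    (Gp X y l).1 ++ (((Gp X y l).2).map (y ++ ·)).flatten = l.flatten := by
  intro l
  induction l with
  | nil => simp [Gp_nil]
  | cons z l ih =>
    intro hl
    have ihl := ih (fun x hx => hl x (by simp [hx]))
    by_cases h : z ∈ Nset X y
    · obtain ⟨us, hus, hz, hGp⟩ := Gp_cons_N h l
      rw [hGp]
      simp only [List.nil_append, List.map_append, List.flatten_append, List.map_cons,
        List.flatten_cons, List.flatten_cons]
      rw [hz, Nw, ← shift_lemma, ← ihl]
      simp [List.append_assoc]
    · rw [Gp_cons_X h]
      simp only [List.flatten_cons]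
      rw [List.append_assoc, ihl]

theorem Gp_spec : ∀ l : List (List A), (∀ z ∈ l, z ∈ Zset X y) →
    (Gp X y l).1 ∈ Lstar X ∧ ∀ c ∈ (Gp X y l).2, c ∈ Uset X y ∨ c ∈ Lstar X := by
  intro l
  induction l with
  | nil =>
    intro _
    exact ⟨⟨[], by simp, rfl⟩, by simp [Gp_nil]⟩
  | cons z l ih =>
    intro hl
    have ihl := ih (fun x hx => hl x (by simp [hx]))
    by_cases h : z ∈ Nset X y
    · obtain ⟨us, hus, hz, hGp⟩ := Gp_cons_N h l
      rw [hGp]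
      refine ⟨⟨[], by simp, rfl⟩, ?_⟩
      intro c hc
      simp only [List.mem_append, List.mem_cons] at hc
      rcases hc with hc | hc | hc
      · exact Or.inl (hus c hc)
      · rw [hc]; exact Or.inr ihl.1
      · exact ihl.2 c hc
    · rw [Gp_cons_X h]
      have hzX : z ∈ X := by
        rcases hl z (by simp) with hz | hz
        · exact hz
        · exact absurd hz h
      refine ⟨?_, ihl.2⟩
      obtain ⟨l', hl', hfl⟩ := ihl.1
      exact ⟨z :: l', by
        intro x hx
        rcases List.mem_cons.1 hx with rfl | hx
        · exact hzX
        · exact hl' x hx, by simp [hfl]⟩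

theorem Gp_prepend : ∀ (xs : List (List A)), (∀ x ∈ xs, x ∉ Nset X y) → ∀ l,
    Gp X y (xs ++ l) = (xs.flatten ++ (Gp X y l).1, (Gp X y l).2) := by
  intro xs
  induction xs with
  | nil => intro _ l; simp
  | cons x xs ih =>
    intro hxs l
    rw [List.cons_append, Gp_cons_X (hxs x (by simp)), ih (fun x hx => hxs x (by simp [hx]))]
    simp

theorem ucmp : ∀ (us us' : List (List A)) (g g' : List A) (gs gs' : List (List A)),
    (∀ u ∈ us, u ∈ Uset X y) → (∀ u ∈ us', u ∈ Uset X y) →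
    g ∈ Lstar X → g' ∈ Lstar X →
    us ++ (g :: gs) = us' ++ (g' :: gs') → us = us' ∧ g = g' ∧ gs = gs' := by
  intro us
  induction us with
  | nil =>
    intro us' g g' gs gs' _ hus' hg hg' heq
    cases us' with
    | nil => simp at heq; exact ⟨rfl, heq.1, heq.2⟩
    | cons u' us' =>
      exfalso
      simp only [List.nil_append, List.cons_append, List.cons.injEq] at heq
      have : g ∈ Uset X y := heq.1 ▸ hus' u' (by simp)
      exact this.1 hg
  | cons u us ih =>
    intro us' g g' gs gs' hus hus' hg hg' heq
    cases us' with
    | nil =>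
      exfalso
      simp only [List.nil_append, List.cons_append, List.cons.injEq] at heq
      have : g' ∈ Uset X y := heq.1 ▸ hus u (by simp)
      exact this.1 hg'
    | cons u' us' =>
      simp only [List.cons_append, List.cons.injEq] at heq
      obtain ⟨h1, h2⟩ := heq
      obtain ⟨h3, h4, h5⟩ := ih us' g g' gs gs' (fun x hx => hus x (by simp [hx]))
        (fun x hx => hus' x (by simp [hx])) hg hg' h2
      exact ⟨by rw [h1, h3], h4, h5⟩

end Core2

end St18

namespace St18

section Core3

variable {A : Type*} {X : Set (List A)} {y : List A}

theorem elem_infix_flatten {z : List A} {l : List (List A)} (h : z ∈ l) : z <:+: l.flatten := by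
  induction l with
  | nil => simp at h
  | cons a l ih =>
    rcases List.mem_cons.1 h with rfl | h
    · exact ⟨[], l.flatten, by simp⟩
    · exact (ih h).trans ⟨a, [], by simp⟩

theorem dropWhile_head_false {p : List A → Bool} :
    ∀ (l : List (List A)) (z : List A) (t : List (List A)),
      l.dropWhile p = z :: t → p z = false := by
  intro l
  induction l with
  | nil => intro z t h; simp at h
  | cons a l ih =>
    intro z t h
    rw [List.dropWhile_cons] at h
    by_cases hpa : p a = true
    · rw [if_pos hpa] at h; exact ih z t h
    · rw [if_neg hpa] at h
      have : a = z := (List.cons.injEq _ _ _ _ ▸ h).1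
      rw [← this]
      simpa using hpa

theorem code_Z (hcode : IsCode X) (hy : y ≠ []) (hunb : Unbordered y)
    (hyF : y ∉ Ffac X) : IsCode (Zset X y) := by
  classical
  have key : ∀ (n : ℕ) (l m : List (List A)), (∀ x ∈ l, x ∈ Zset X y) →
      (∀ x ∈ m, x ∈ Zset X y) → l.flatten = m.flatten → l.flatten.length ≤ n → l = m := by
    intro n
    induction n with
    | zero =>
      intro l m hl hm heq hlen
      have hl0 : l = [] := by
        cases l with
        | nil => rfl
        | cons z l =>
          exfalso
          have hz := Z_ne_nil hcode hy (hl z (by simp))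
          have : z.length + l.flatten.length ≤ 0 := by simpa using hlen
          have : z.length = 0 := by omega
          exact hz (List.eq_nil_of_length_eq_zero this)
      have hm0 : m = [] := by
        cases m with
        | nil => rfl
        | cons z m =>
          exfalso
          have hz := Z_ne_nil hcode hy (hm z (by simp))
          rw [hl0] at heq
          have : z.length + m.flatten.length = 0 := by
            simpa using congrArg List.length heq.symm
          exact hz (List.eq_nil_of_length_eq_zero (by omega))
      rw [hl0, hm0]
    | succ n ih =>
      intro l m hl hm heq hlen
      -- split off maximal X-prefixes
      set p : List A → Bool := fun z => decide (z ∈ X) with hp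
      set xs := l.takeWhile p with hxs
      set l₂ := l.dropWhile p with hl₂
      set xs' := m.takeWhile p with hxs'
      set m₂ := m.dropWhile p with hm₂
      have hlsplit : xs ++ l₂ = l := List.takeWhile_append_dropWhile (p := p) (l := l)
      have hmsplit : xs' ++ m₂ = m := List.takeWhile_append_dropWhile (p := p) (l := m)
      have hxsX : ∀ x ∈ xs, x ∈ X := by
        intro x hx
        have := List.mem_takeWhile_imp hx
        simpa [hp] using this
      have hxs'X : ∀ x ∈ xs', x ∈ X := by
        intro x hx
        have := List.mem_takeWhile_imp hx
        simpa [hp] using this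
      have hxsNN : ∀ x ∈ xs, x ∉ Nset X y := fun x hx hN => X_N_disjoint hyF (hxsX x hx) hN
      have hxs'NN : ∀ x ∈ xs', x ∉ Nset X y := fun x hx hN => X_N_disjoint hyF (hxs'X x hx) hN
      cases hc1 : l₂ with
      | nil =>
        cases hc2 : m₂ with
        | nil =>
          -- both in X*
          apply hcode l m
          · intro x hx
            rw [← hlsplit, hc1] at hx
            exact hxsX x (by simpa using hx)
          · intro x hx
            rw [← hmsplit, hc2] at hx
            exact hxs'X x (by simpa using hx)
          · exact heq
        | cons z' m₃ =>
          exfalso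
          have hz'Z : z' ∈ Zset X y := hm z' (by rw [← hmsplit, hc2]; simp)
          have hz'N : z' ∈ Nset X y := by
            rcases hz'Z with h | h
            · exfalso
              have := dropWhile_head_false m z' m₃ (by rw [← hm₂, hc2])
              simp [hp, h] at this
            · exact h
          have hyz : y <:+: z' := y_infix_of_mem_N hz'N
          have hzfl : z' <:+: m.flatten := elem_infix_flatten (by rw [← hmsplit, hc2]; simp)
          have hflX : l.flatten ∈ Lstar X := ⟨l, fun x hx => by
            rw [← hlsplit, hc1] at hx
            exact hxsX x (by simpa using hx), rfl⟩
          exact yfree_of_Lstar hyF hflX (by rw [heq]; exact hyz.trans hzfl)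
      | cons z l₃ =>
        cases hc2 : m₂ with
        | nil =>
          exfalso
          have hzZ : z ∈ Zset X y := hl z (by rw [← hlsplit, hc1]; simp)
          have hzN : z ∈ Nset X y := by
            rcases hzZ with h | h
            · exfalso
              have := dropWhile_head_false l z l₃ (by rw [← hl₂, hc1])
              simp [hp, h] at this
            · exact h
          have hyz : y <:+: z := y_infix_of_mem_N hzN
          have hzfl : z <:+: l.flatten := elem_infix_flatten (by rw [← hlsplit, hc1]; simp)
          have hflX : m.flatten ∈ Lstar X := ⟨m, fun x hx => by
            rw [← hmsplit, hc2] at hx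
            exact hxs'X x (by simpa using hx), rfl⟩
          exact yfree_of_Lstar hyF hflX (by rw [← heq]; exact hyz.trans hzfl)
        | cons z' m₃ =>
          -- the main case
          have hzZ : z ∈ Zset X y := hl z (by rw [← hlsplit, hc1]; simp)
          have hz'Z : z' ∈ Zset X y := hm z' (by rw [← hmsplit, hc2]; simp)
          have hzN : z ∈ Nset X y := by
            rcases hzZ with h | h
            · exfalso
              have := dropWhile_head_false l z l₃ (by rw [← hl₂, hc1])
              simp [hp, h] at this
            · exact h
          have hz'N : z' ∈ Nset X y := by
            rcases hz'Z with h | h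
            · exfalso
              have := dropWhile_head_false m z' m₃ (by rw [← hm₂, hc2])
              simp [hp, h] at this
            · exact h
          have hl₃Z : ∀ x ∈ l₃, x ∈ Zset X y := fun x hx =>
            hl x (by rw [← hlsplit, hc1]; simp [hx])
          have hm₃Z : ∀ x ∈ m₃, x ∈ Zset X y := fun x hx =>
            hm x (by rw [← hmsplit, hc2]; simp [hx])
          obtain ⟨us, hus, hzw, hGpl⟩ := Gp_cons_N hzN l₃
          obtain ⟨us', hus', hz'w, hGpm⟩ := Gp_cons_N hz'N m₃
          have hGl : Gp X y l = (xs.flatten ++ [],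
              us ++ ((Gp X y l₃).1 :: (Gp X y l₃).2)) := by
            rw [← hlsplit, hc1, Gp_prepend xs hxsNN, hGpl]
          have hGm : Gp X y m = (xs'.flatten ++ [],
              us' ++ ((Gp X y m₃).1 :: (Gp X y m₃).2)) := by
            rw [← hmsplit, hc2, Gp_prepend xs' hxs'NN, hGpm]
          -- apply sync
          have hwl := Gp_word l hl
          have hwm := Gp_word m hm
          have hspl := Gp_spec l₃ hl₃Z
          have hspm := Gp_spec m₃ hm₃Z
          have hyfree : ∀ c, (c ∈ Uset X y ∨ c ∈ Lstar X) → ¬ y <:+: c := by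
            rintro c (hc | hc)
            · exact hc.2
            · exact yfree_of_Lstar hyF hc
          have hsync := sync hy hunb (us ++ ((Gp X y l₃).1 :: (Gp X y l₃).2))
            (xs.flatten ++ []) (us' ++ ((Gp X y m₃).1 :: (Gp X y m₃).2)) (xs'.flatten ++ [])
            (by
              rw [List.append_nil]
              exact hyfree _ (Or.inr ⟨xs, hxsX, rfl⟩))
            (by
              intro c hc
              rcases List.mem_append.1 hc with hc | hc
              · exact hyfree _ (Or.inl (hus c hc))
              · rcases List.mem_cons.1 hc with rfl | hc
                · exact hyfree _ (Or.inr hspl.1)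
                · exact hyfree _ (hspl.2 c hc))
            (by
              rw [List.append_nil]
              exact hyfree _ (Or.inr ⟨xs', hxs'X, rfl⟩))
            (by
              intro c hc
              rcases List.mem_append.1 hc with hc | hc
              · exact hyfree _ (Or.inl (hus' c hc))
              · rcases List.mem_cons.1 hc with rfl | hc
                · exact hyfree _ (Or.inr hspm.1)
                · exact hyfree _ (hspm.2 c hc))
            (by
              have e1 : (Gp X y l).1 = xs.flatten ++ [] := by rw [hGl]
              have e2 : (Gp X y l).2 = us ++ ((Gp X y l₃).1 :: (Gp X y l₃).2) := by rw [hGl]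
              have e3 : (Gp X y m).1 = xs'.flatten ++ [] := by rw [hGm]
              have e4 : (Gp X y m).2 = us' ++ ((Gp X y m₃).1 :: (Gp X y m₃).2) := by rw [hGm]
              rw [← e1, ← e2, ← e3, ← e4, hwl, hwm, heq])
          obtain ⟨hgap0, hgaps⟩ := hsync
          have hxsfl : xs.flatten = xs'.flatten := by
            rwa [List.append_nil, List.append_nil] at hgap0
          obtain ⟨husus, hg1, hg2⟩ := ucmp us us' (Gp X y l₃).1 (Gp X y m₃).1
            (Gp X y l₃).2 (Gp X y m₃).2 hus hus' hspl.1 hspm.1 hgaps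
          have hzz' : z = z' := by rw [hzw, hz'w, husus]
          have hxseq : xs = xs' := hcode xs xs' hxsX hxs'X hxsfl
          -- cancel and recurse
          have hfll : l.flatten = xs.flatten ++ (z ++ l₃.flatten) := by
            rw [← hlsplit, hc1]; simp
          have hflm : m.flatten = xs'.flatten ++ (z' ++ m₃.flatten) := by
            rw [← hmsplit, hc2]; simp
          have hfl3 : l₃.flatten = m₃.flatten := by
            have h1 : xs.flatten ++ (z ++ l₃.flatten) = xs'.flatten ++ (z' ++ m₃.flatten) := by
              rw [← hfll, ← hflm, heq]
            rw [← hxsfl, ← hzz'] at h1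
            have h2 := List.append_cancel_left h1
            exact List.append_cancel_left h2
          have hzlen : 1 ≤ z.length := by
            have := Z_ne_nil hcode hy hzZ
            cases z with
            | nil => exact absurd rfl this
            | cons a t => simp
          have hlen3 : l₃.flatten.length ≤ n := by
            have : l.flatten.length = xs.flatten.length + z.length + l₃.flatten.length := by
              rw [hfll]; simp [Nat.add_assoc]
            omega
          have hrec := ih l₃ m₃ hl₃Z hm₃Z hfl3 hlen3
          rw [← hlsplit, ← hmsplit, hc1, hc2, hxseq, hzz', hrec]
  intro l m hl hm heq
  exact key l.flatten.length l m hl hm heq le_rfl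

end Core3

end St18

namespace St18

section Core4

variable {A : Type*} {X : Set (List A)} {y : List A}

/-- every word `w` has `w ++ y` decomposable into `y`-free gaps followed by `y`s. -/
theorem rep_lemma (hy : y ≠ []) : ∀ (w : List A),
    ∃ cs : List (List A), (∀ c ∈ cs, ¬ y <:+: c) ∧
      w ++ y = (cs.map (· ++ y)).flatten := by
  have key : ∀ (n : ℕ) (w : List A), w.length ≤ n →
      ∃ cs : List (List A), (∀ c ∈ cs, ¬ y <:+: c) ∧
        w ++ y = (cs.map (· ++ y)).flatten := by
    intro n
    induction n with
    | zero =>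
      intro w hw
      have : w = [] := List.eq_nil_of_length_eq_zero (by omega)
      subst this
      exact ⟨[[]], by
        constructor
        · intro c hc
          simp at hc
          subst hc
          intro hinf
          have := List.eq_nil_of_infix_nil hinf
          exact hy this
        · simp⟩
    | succ n ih =>
      intro w hw
      by_cases hinf : y <:+: w
      · -- find occurrence with minimal prefix length
        have hex : ∃ k, ∃ p q : List A, p.length = k ∧ w = p ++ y ++ q := by
          obtain ⟨p, q, hpq⟩ := hinf
          exact ⟨p.length, p, q, rfl, by rw [← hpq]⟩
        classical
        obtain ⟨p, q, hpk, hpq⟩ := Nat.find_spec hex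
        have hpfree : ¬ y <:+: p := by
          intro hyp
          obtain ⟨p₁, p₂, hp⟩ := hyp
          have : ∃ p' q' : List A, p'.length = p₁.length ∧ w = p' ++ y ++ q' :=
            ⟨p₁, p₂ ++ y ++ q, rfl, by
              rw [hpq, ← hp]
              simp [List.append_assoc]⟩
          have hlt := Nat.find_min hex (m := p₁.length) (by
            rw [← hpk]
            have : p.length = p₁.length + y.length + p₂.length := by
              rw [← hp]; simp; omega
            have hylen : 1 ≤ y.length := by
              cases y with
              | nil => exact absurd rfl hy
              | cons a t => simp
            omega)
          exact hlt ⟨p₁, p₂ ++ y ++ q, rfl, by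
            rw [hpq, ← hp]
            simp [List.append_assoc]⟩
        have hqlen : q.length ≤ n := by
          have : w.length = p.length + y.length + q.length := by
            rw [hpq]; simp; omega
          have hylen : 1 ≤ y.length := by
            cases y with
            | nil => exact absurd rfl hy
            | cons a t => simp
          omega
        obtain ⟨cs', hcs', hq⟩ := ih q hqlen
        refine ⟨p :: cs', ?_, ?_⟩
        · intro c hc
          rcases List.mem_cons.1 hc with rfl | hc
          · exact hpfree
          · exact hcs' c hc
        · simp only [List.map_cons, List.flatten_cons]
          rw [hpq, ← hq]
          simp [List.append_assoc]
      · exact ⟨[w], by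
          constructor
          · intro c hc; simp at hc; subst hc; exact hinf
          · simp⟩
  intro w
  exact key w.length w le_rfl

theorem parse_lemma (hyF : y ∉ Ffac X) :
    ∀ cs : List (List A), (∀ c ∈ cs, ¬ y <:+: c) →
      ∃ (us : List (List A)) (l : List (List A)),
        (∀ u ∈ us, u ∈ Uset X y) ∧ (∀ z ∈ l, z ∈ Zset X y) ∧
        Nw y us ++ l.flatten = y ++ (cs.map (· ++ y)).flatten := by
  intro cs
  induction cs with
  | nil => exact fun _ => ⟨[], [], by simp, by simp, by simp [Nw]⟩
  | cons c cs ih =>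
    intro hcs
    obtain ⟨us', l', hus', hl', heq⟩ := ih (fun x hx => hcs x (by simp [hx]))
    by_cases hcX : c ∈ Lstar X
    · obtain ⟨xl, hxl, hxlf⟩ := hcX
      refine ⟨[], xl ++ (Nw y us' :: l'), by simp, ?_, ?_⟩
      · intro z hz
        rcases List.mem_append.1 hz with hz | hz
        · exact Or.inl (hxl z hz)
        · rcases List.mem_cons.1 hz with rfl | hz
          · exact Or.inr ⟨us', hus', rfl⟩
          · exact hl' z hz
      · simp only [Nw, List.map_nil, List.flatten_nil, List.append_nil, List.flatten_append,
          List.flatten_cons, List.map_cons]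
        simp only [Nw, List.append_assoc] at heq
        have h2 := List.append_cancel_left heq
        rw [hxlf]
        simp only [List.append_assoc]
        rw [h2]
    · refine ⟨c :: us', l', ?_, hl', ?_⟩
      · intro u hu
        rcases List.mem_cons.1 hu with rfl | hu
        · exact ⟨hcX, hcs u (by simp)⟩
        · exact hus' u hu
      · rw [Nw_cons]
        simp only [List.map_cons, List.flatten_cons]
        rw [List.append_assoc, heq]
        simp [List.append_assoc]

end Core4

end St18

namespace St18

section Core5

variable {A : Type*} {X : Set (List A)} {y : List A}

theorem complete_Z (hy : y ≠ []) (hyF : y ∉ Ffac X) : IsCompleteSet (Zset X y) := by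
  intro w
  obtain ⟨cs, hcs, hrep⟩ := rep_lemma hy w
  obtain ⟨us, l, hus, hl, heq⟩ := parse_lemma hyF cs hcs
  refine ⟨Nw y us :: l, ?_, ?_⟩
  · intro x hx
    rcases List.mem_cons.1 hx with rfl | hx
    · exact Or.inr ⟨us, hus, rfl⟩
    · exact hl x hx
  · refine ⟨y, y, ?_⟩
    simp only [List.flatten_cons]
    rw [heq, ← hrep]
    simp [List.append_assoc]

/-- `Nset` as a concatenation, for regularity. -/
theorem Nset_eq : Nset X y = Lcat {y} (Lstar (Lcat (Uset X y) {y})) := by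
  ext v
  constructor
  · rintro ⟨us, hus, rfl⟩
    refine ⟨y, (us.map (· ++ y)).flatten, rfl, ?_, rfl⟩
    refine ⟨us.map (· ++ y), ?_, rfl⟩
    intro x hx
    obtain ⟨u, hu, rfl⟩ := List.mem_map.1 hx
    exact ⟨u, y, hus u hu, rfl, rfl⟩
  · rintro ⟨u, v, hu, ⟨l, hl, rfl⟩, rfl⟩
    have hu' : u = y := hu
    -- convert l (list of words of form u ++ y) into us
    have : ∃ us : List (List A), (∀ u ∈ us, u ∈ Uset X y) ∧
        l.flatten = (us.map (· ++ y)).flatten := by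
      induction l with
      | nil => exact ⟨[], by simp, by simp⟩
      | cons x l ihl =>
        obtain ⟨us, hus, hfl⟩ := ihl (fun z hz => hl z (by simp [hz]))
        obtain ⟨u', v', huU, hv', rfl⟩ := hl x (by simp)
        have hv'' : v' = y := hv'
        exact ⟨u' :: us, by
          intro z hz
          rcases List.mem_cons.1 hz with rfl | hz
          · exact huU
          · exact hus z hz, by simp [hfl, hv'']⟩
    obtain ⟨us, hus, hfl⟩ := this
    exact ⟨us, hus, by rw [Nw, ← hfl, hu']⟩

theorem UY_free (hy : y ≠ []) : ∀ x ∈ Lcat (Uset X y) {y}, x ≠ [] := by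
  rintro x ⟨u, v, hu, hv, rfl⟩ hx
  have hv' : v = y := hv
  rw [List.append_eq_nil_iff] at hx
  exact hy (hv' ▸ hx.2)

end Core5

end St18


namespace St18


def ycand {A : Type*} (a b : A) (m : List A) : List A :=
  List.replicate (m.length + 1) a ++ [b] ++ m ++ List.replicate (m.length + 1) b

variable {A : Type*} {a b : A} {m : List A}

theorem ycand_length : (ycand a b m).length = 3 * (m.length + 1) := by
  simp [ycand]; omega

theorem ycand_ne_nil : ycand a b m ≠ [] := by
  simp [ycand]

theorem ycand_split1 : ycand a b m =
    List.replicate (m.length + 1) a ++ ([b] ++ m ++ List.replicate (m.length + 1) b) := by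
  simp [ycand, List.append_assoc]

theorem ycand_split2 : ycand a b m =
    (List.replicate (m.length + 1) a ++ [b] ++ m) ++ List.replicate (m.length + 1) b := rfl

theorem ycand_split3 : ycand a b m =
    (List.replicate (m.length + 1) a ++ [b]) ++ (m ++ List.replicate (m.length + 1) b) := by
  simp [ycand, List.append_assoc]

theorem ycand_unbordered (hab : a ≠ b) : Unbordered (ycand a b m) := by
  intro t hpre hsuf
  by_cases h0 : t = []
  · exact Or.inl h0
  by_cases hL : t.length = (ycand a b m).length
  · exact Or.inr (hpre.eq_of_length hL)
  exfalso
  have hylen : (ycand a b m).length = 3 * (m.length + 1) := ycand_length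
  have htlen : t.length < 3 * (m.length + 1) := by
    have h1 := hpre.length_le
    rw [hylen] at hL
    omega
  have htpos : 0 < t.length := List.length_pos_iff.2 h0
  obtain ⟨t₂, ht₂⟩ := hpre
  obtain ⟨t₁, ht₁⟩ := hsuf
  have habmem : b ∈ List.replicate (m.length + 1) a → False :=
    fun h => hab (List.eq_of_mem_replicate h).symm
  by_cases hc : t.length ≤ m.length + 1
  · -- short border: all a's as prefix, all b's as suffix
    have hta : t = List.replicate t.length a := by
      have h1 : (ycand a b m).take t.length = t := by rw [← ht₂, List.take_left]
      rw [ycand_split1, List.take_append, List.take_replicate] at h1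
      have hmin : min t.length (m.length + 1) = t.length := min_eq_left hc
      have hz : t.length - (List.replicate (m.length + 1) a).length = 0 := by simp; omega
      rw [hmin, hz, List.take_zero, List.append_nil] at h1
      exact h1.symm
    have htb : t = List.replicate t.length b := by
      have h1 : (ycand a b m).drop ((ycand a b m).length - t.length) = t := by
        rw [← ht₁, List.length_append, Nat.add_sub_cancel, List.drop_left]
      rw [hylen] at h1
      rw [ycand_split2, List.drop_append] at h1
      have hdrop1 : (List.replicate (m.length + 1) a ++ [b] ++ m).drop
          (3 * (m.length + 1) - t.length) = [] := by
        apply List.drop_eq_nil_of_le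
        simp; omega
      rw [hdrop1, List.nil_append, List.drop_replicate] at h1
      have harith : (m.length + 1) -
          (3 * (m.length + 1) - t.length - (List.replicate (m.length+1) a ++ [b] ++ m).length)
          = t.length := by
        simp; omega
      rw [harith] at h1
      exact h1.symm
    have hmem : a ∈ t := by rw [hta]; exact List.mem_replicate.2 ⟨by omega, rfl⟩
    rw [htb] at hmem
    exact hab (List.eq_of_mem_replicate hmem)
  · push_neg at hc
    have hppos : 0 < 3 * (m.length + 1) - t.length := by omega
    have hplt : 3 * (m.length + 1) - t.length < 2 * (m.length + 1) := by omega
    -- t.take (m.length+1) = replicate (m.length+1) a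
    have htake : t.take (m.length + 1) = List.replicate (m.length + 1) a := by
      have h1 : (ycand a b m).take (m.length + 1) = t.take (m.length + 1) := by
        rw [← ht₂, List.take_append]
        have hz : (m.length + 1) - t.length = 0 := by omega
        rw [hz, List.take_zero, List.append_nil]
      rw [ycand_split1, List.take_append, List.take_replicate] at h1
      have hz : (m.length + 1) - (List.replicate (m.length + 1) a).length = 0 := by simp
      rw [min_self, hz, List.take_zero, List.append_nil] at h1
      exact h1.symm
    have hdrop : t = (ycand a b m).drop (3 * (m.length + 1) - t.length) := by
      rw [← ht₁]
      have hlen1 : t₁.length = 3 * (m.length + 1) - t.length := by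
        have h2 := congrArg List.length ht₁
        simp only [List.length_append] at h2
        rw [hylen] at h2
        omega
      rw [← hlen1, List.drop_left]
    have hwin : ((ycand a b m).drop (3 * (m.length + 1) - t.length)).take (m.length + 1) =
        List.replicate (m.length + 1) a := by
      rw [← hdrop, htake]
    by_cases hpn : 3 * (m.length + 1) - t.length ≤ m.length + 1
    · -- window hits the b at position m.length+1
      rw [ycand_split1, List.drop_append, List.drop_replicate] at hwin
      have hz : (3 * (m.length + 1) - t.length) - (List.replicate (m.length+1) a).length = 0 := by
        simp; omega
      rw [hz, List.drop_zero, List.take_append, List.take_replicate] at hwin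
      have hmin : min (m.length + 1) ((m.length + 1) - (3 * (m.length + 1) - t.length)) =
          (m.length + 1) - (3 * (m.length + 1) - t.length) := by omega
      rw [hmin] at hwin
      have hlen2 : (List.replicate ((m.length + 1) - (3 * (m.length + 1) - t.length)) a).length =
          (m.length + 1) - (3 * (m.length + 1) - t.length) := by simp
      rw [hlen2] at hwin
      have hbmem : b ∈ List.replicate ((m.length + 1) - (3 * (m.length + 1) - t.length)) a ++
          ([b] ++ m ++ List.replicate (m.length + 1) b).take
            ((m.length + 1) - ((m.length + 1) - (3 * (m.length + 1) - t.length))) := by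
        apply List.mem_append.2
        right
        have hpos2 : 0 < (m.length + 1) - ((m.length + 1) - (3 * (m.length + 1) - t.length)) := by
          omega
        have h3 : ([b] ++ m ++ List.replicate (m.length + 1) b) = b :: (m ++ List.replicate (m.length + 1) b) := by
          simp
        rw [h3]
        cases hnn : (m.length + 1) - ((m.length + 1) - (3 * (m.length + 1) - t.length)) with
        | zero => omega
        | succ k =>
          rw [List.take_succ_cons]
          simp
      rw [hwin] at hbmem
      exact habmem hbmem
    · -- window hits the final b's
      push_neg at hpn
      rw [ycand_split3, List.drop_append] at hwin
      have hP2len : (List.replicate (m.length + 1) a ++ [b]).length = m.length + 2 := by simp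
      have hdrop2 : (List.replicate (m.length + 1) a ++ [b]).drop
          (3 * (m.length + 1) - t.length) = [] := by
        apply List.drop_eq_nil_of_le
        rw [hP2len]; omega
      rw [hdrop2, List.nil_append, hP2len] at hwin
      rw [List.drop_append] at hwin
      have hz : (3 * (m.length + 1) - t.length - (m.length + 2)) - m.length = 0 := by omega
      rw [hz, List.drop_zero, List.take_append, List.take_replicate] at hwin
      have hdklen : (m.drop (3 * (m.length + 1) - t.length - (m.length + 2))).length =
          m.length - (3 * (m.length + 1) - t.length - (m.length + 2)) := by simp
      rw [hdklen] at hwin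
      apply habmem
      rw [← hwin]
      apply List.mem_append.2
      right
      refine List.mem_replicate.2 ⟨?_, rfl⟩
      omega

end St18


namespace St18

section Glue

variable {A : Type*} {X : Set (List A)} {y : List A}

theorem FacY_eq : {w : List A | y <:+: w} =
    Lcat Set.univ (Lcat {y} Set.univ) := by
  ext w
  constructor
  · intro h
    obtain ⟨s, t, hst⟩ := h
    exact ⟨s, y ++ t, trivial, ⟨y, t, rfl, trivial, rfl⟩, by rw [← hst]; simp [List.append_assoc]⟩
  · rintro ⟨s, r, _, ⟨u, t, hu, _, rfl⟩, rfl⟩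
    have hu' : u = y := hu
    exact ⟨s, t, by rw [hu', List.append_assoc]⟩

theorem Uset_eq : Uset X y = (Lstar X ∪ {w : List A | y <:+: w})ᶜ := by
  ext u
  simp only [Uset, Set.mem_setOf_eq, Set.mem_compl_iff, Set.mem_union]
  tauto

theorem reg_Zset (hregX : IsRegularLang X) (hcode : IsCode X) (hy : y ≠ []) :
    IsRegularLang (Zset X y) := by
  have hXfree : ∀ x ∈ X, x ≠ [] := fun x hx hxe => nil_not_mem_X hcode (hxe ▸ hx)
  have r1 : IsRegularLang (Lstar X) := reg_Lstar hregX hXfree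
  have r2 : IsRegularLang {w : List A | y <:+: w} := by
    rw [FacY_eq]
    exact St18x.reg_cat reg_univ (St18x.reg_cat (reg_word y) reg_univ)
  have r3 : IsRegularLang (Uset X y) := by
    rw [Uset_eq]
    exact reg_compl (reg_union r1 r2)
  have r4 : IsRegularLang (Lcat (Uset X y) {y}) := St18x.reg_cat r3 (reg_word y)
  have r5 : IsRegularLang (Lstar (Lcat (Uset X y) {y})) := reg_Lstar r4 (UY_free hy)
  have r6 : IsRegularLang (Nset X y) := by
    rw [Nset_eq]
    exact St18x.reg_cat (reg_word y) r5
  exact reg_union hregX r6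

theorem indep_Z {θ θ' : List A → List A}
    (hmono : ∀ u v : List A, u <:+: v → θ u <:+: θ v)
    (hmono' : ∀ u v : List A, u <:+: v → θ' u <:+: θ' v)
    (hinv : ∀ v, θ' (θ v) = v)
    (hθyF : θ y ∉ Ffac X) (hθ'yF : θ' y ∉ Ffac X)
    (hN : ∀ x, x ∈ Nset X y → θ x ∈ Nset X y → False)
    (hind : ¬ ∃ x ∈ X, ∃ z ∈ X, x ≠ z ∧ z = θ x) :
    ¬ ∃ x ∈ Zset X y, ∃ z ∈ Zset X y, x ≠ z ∧ z = θ x := by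
  rintro ⟨x, hx, z, hz, hne, rfl⟩
  rcases hx with hxX | hxN
  · rcases hz with hzX | hzN
    · exact hind ⟨x, hxX, θ x, hzX, hne, rfl⟩
    · have hyinf := y_infix_of_mem_N hzN
      have h2 := hmono' _ _ hyinf
      rw [hinv] at h2
      exact hθ'yF (mem_Ffac_of_infix h2 (X_sub_Ffac hxX))
  · rcases hz with hzX | hzN
    · have hyinf := y_infix_of_mem_N hxN
      have h2 := hmono _ _ hyinf
      exact hθyF (mem_Ffac_of_infix h2 (X_sub_Ffac hzX))
    · exact hN x hxN hzN

theorem w_infix_ycand (a b : A) (m : List A) : m <:+: ycand a b m :=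
  ⟨List.replicate (m.length + 1) a ++ [b], List.replicate (m.length + 1) b, by
    simp [ycand, List.append_assoc]⟩

/-- case 4 for morphisms: if `σ` moves the head letter `a`. -/
theorem hN_map (σ : Equiv.Perm A) (ha : σ a ≠ a) (m : List A) :
    ∀ x, x ∈ Nset X (ycand a b m) → (x.map σ) ∈ Nset X (ycand a b m) → False := by
  intro x hx hmx
  set y := ycand a b m with hy
  obtain ⟨us, _, rfl⟩ := hx
  have h1 : y <+: Nw y us := y_prefix_Nw us
  have h2 : y <+: (Nw y us).map σ := by
    obtain ⟨us', _, heq⟩ := hmx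
    rw [heq]
    exact y_prefix_Nw us'
  have h3 : y.map σ <+: (Nw y us).map σ := h1.map σ
  have h4 : y.map σ = y := by
    have h5 : y.map σ <+: y := List.prefix_of_prefix_length_le h3 h2 (by simp)
    exact h5.eq_of_length (by simp)
  have h6 : (y.map σ).head? = y.head? := by rw [h4]
  have h7 : y.head? = some a := by
    rw [hy]
    simp [ycand, List.replicate_succ]
  rw [List.head?_map, h7] at h6
  simp at h6
  exact ha h6

/-- case 4 for antimorphisms, using the marker letter `σ.symm a`. -/
theorem hN_anti (σ : Equiv.Perm A) (hab : a ≠ b) (w₀ : List A) :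
    ∀ x, x ∈ Nset X (ycand a b (w₀ ++ [σ.symm a])) →
      ((x.map σ).reverse) ∈ Nset X (ycand a b (w₀ ++ [σ.symm a])) → False := by
  intro x hx hmx
  set d := σ.symm a with hd
  set y := ycand a b (w₀ ++ [d]) with hy
  set n := (w₀ ++ [d]).length + 1 with hn
  obtain ⟨us, _, rfl⟩ := hx
  have h1 : y <:+ Nw y us := y_suffix_Nw us
  obtain ⟨t, ht⟩ := h1
  have h2 : y <+: ((Nw y us).map σ).reverse := by
    obtain ⟨us', _, heq⟩ := hmx
    rw [heq]
    exact y_prefix_Nw us'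
  have h3 : (y.map σ).reverse <+: ((Nw y us).map σ).reverse := by
    rw [← ht]
    simp only [List.map_append, List.reverse_append]
    exact ⟨(t.map σ).reverse, rfl⟩
  have h4 : (y.map σ).reverse = y := by
    have h5 : (y.map σ).reverse <+: y := List.prefix_of_prefix_length_le h3 h2 (by simp)
    exact h5.eq_of_length (by simp)
  have hE : y.map σ = y.reverse := by
    conv_lhs => rw [← List.reverse_reverse (y.map σ)]
    rw [h4]
  -- structured splits
  have hyP : y = (List.replicate n a ++ [b] ++ w₀) ++ ([d] ++ List.replicate n b) := by
    rw [hy, hn]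
    simp [ycand, List.append_assoc]
  have hrev : y.reverse = (List.replicate n b ++ [d] ++ w₀.reverse) ++
      ([b] ++ List.replicate n a) := by
    rw [hy, hn]
    simp [ycand, List.reverse_append, List.append_assoc]
  have hPlen : (List.replicate n a ++ [b] ++ w₀).length = n + 1 + w₀.length := by simp; omega
  have hQlen : (List.replicate n b ++ [d] ++ w₀.reverse).length = n + 1 + w₀.length := by
    simp; omega
  have hL : (y.map σ).drop (n + 1 + w₀.length) = σ d :: (List.replicate n b).map σ := by
    rw [← List.map_drop]
    rw [hyP, ← hPlen, List.drop_left]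
    simp
  have hR : y.reverse.drop (n + 1 + w₀.length) = b :: List.replicate n a := by
    rw [hrev, ← hQlen, List.drop_left]
    simp
  rw [hE, hR] at hL
  have h8 : σ d = b := by
    have := hL.symm
    injection this
  rw [hd] at h8
  simp at h8
  exact hab h8

end Glue

end St18

/-- for `θ` the (anti-)automorphism of `A*` extending a permutation
`σ` of `A`, every regular `θ̲`-independent code embeds in a complete
(`θ̲`-independent, regular) code. -/
theorem stmt_18 {A : Type*} [Fintype A] (hA : 2 ≤ Fintype.card A)
    (σ : Equiv.Perm A) (θ : List A → List A)
    (hθ : (∀ w : List A, θ w = w.map σ) ∨ (∀ w : List A, θ w = (w.map σ).reverse))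
    (X : Set (List A)) (hreg : IsRegularLang X) (hcode : IsCode X)
    (hind : ¬ ∃ x ∈ X, ∃ y ∈ X, x ≠ y ∧ y = θ x) :
    ∃ Z : Set (List A), X ⊆ Z ∧ IsCode Z ∧ IsCompleteSet Z ∧
      (¬ ∃ x ∈ Z, ∃ y ∈ Z, x ≠ y ∧ y = θ x) ∧ IsRegularLang Z := by
  classical
  by_cases hcomp : IsCompleteSet X
  · exact ⟨X, subset_rfl, hcode, hcomp, hind, hreg⟩
  · have hwex : ∃ w : List A, w ∉ St18.Ffac X := by
      unfold IsCompleteSet at hcomp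
      push_neg at hcomp
      obtain ⟨w, hw⟩ := hcomp
      refine ⟨w, ?_⟩
      rintro ⟨l, hl, hinf⟩
      exact hw l hl hinf
    obtain ⟨w, hwF⟩ := hwex
    have hA1 : 1 < Fintype.card A := by omega
    rcases hθ with hmap | hanti
    · -- morphism case
      have hθeq : θ = fun v => v.map σ := funext hmap
      subst hθeq
      by_cases hσ : ∀ c : A, σ c = c
      · -- θ is the identity
        have hid : ∀ v : List A, v.map σ = v := by
          intro v
          rw [show (⇑σ) = id from funext hσ, List.map_id]
        obtain ⟨a, b, hab⟩ := Fintype.exists_pair_of_one_lt_card hA1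
        set y := St18.ycand a b w with hydef
        have hyne : y ≠ [] := St18.ycand_ne_nil
        have hunb : St18.Unbordered y := St18.ycand_unbordered hab
        have hwy : w <:+: y := St18.w_infix_ycand a b w
        have hyF : y ∉ St18.Ffac X := fun h => hwF (St18.mem_Ffac_of_infix hwy h)
        refine ⟨St18.Zset X y, Set.subset_union_left,
          St18.code_Z hcode hyne hunb hyF, St18.complete_Z hyne hyF, ?_,
          St18.reg_Zset hreg hcode hyne⟩
        rintro ⟨x, _, z, _, hne, hzeq⟩
        exact hne (hzeq.trans (hid x)).symm
      · push_neg at hσ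
        obtain ⟨a, ha⟩ := hσ
        obtain ⟨b, hb⟩ := Fintype.exists_ne_of_one_lt_card hA1 a
        have hab : a ≠ b := hb.symm
        set w₀ := w.map σ.symm ++ w ++ w.map σ with hw₀
        set y := St18.ycand a b w₀ with hydef
        have hyne : y ≠ [] := St18.ycand_ne_nil
        have hunb : St18.Unbordered y := St18.ycand_unbordered hab
        have hw₀y : w₀ <:+: y := St18.w_infix_ycand a b w₀
        have hwy : w <:+: y := by
          refine List.IsInfix.trans ?_ hw₀y
          exact ⟨w.map σ.symm, w.map σ, rfl⟩
        have hyF : y ∉ St18.Ffac X := fun h => hwF (St18.mem_Ffac_of_infix hwy h)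
        have hθyF : y.map σ ∉ St18.Ffac X := by
          intro h
          apply hwF
          refine St18.mem_Ffac_of_infix ?_ h
          have h1 : w.map σ.symm <:+: y := by
            refine List.IsInfix.trans ?_ hw₀y
            exact ⟨[], w ++ w.map σ, by rw [hw₀]; simp [List.append_assoc]⟩
          have h2 := h1.map σ
          simpa using h2
        have hθ'yF : y.map σ.symm ∉ St18.Ffac X := by
          intro h
          apply hwF
          refine St18.mem_Ffac_of_infix ?_ h
          have h1 : w.map σ <:+: y := by
            refine List.IsInfix.trans ?_ hw₀y
            exact ⟨w.map σ.symm ++ w, [], by rw [hw₀]; simp [List.append_assoc]⟩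
          have h2 := h1.map σ.symm
          simpa using h2
        refine ⟨St18.Zset X y, Set.subset_union_left,
          St18.code_Z hcode hyne hunb hyF, St18.complete_Z hyne hyF, ?_,
          St18.reg_Zset hreg hcode hyne⟩
        exact St18.indep_Z (θ' := fun v => v.map σ.symm)
          (fun u v h => h.map σ) (fun u v h => h.map σ.symm)
          (fun v => by simp) hθyF hθ'yF (St18.hN_map σ ha w₀) hind
    · -- antimorphism case
      have hθeq : θ = fun v => (v.map σ).reverse := funext hanti
      subst hθeq
      obtain ⟨a, b, hab⟩ := Fintype.exists_pair_of_one_lt_card hA1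
      set w₀ := (w.map σ.symm).reverse ++ w ++ (w.map σ).reverse with hw₀
      set y := St18.ycand a b (w₀ ++ [σ.symm a]) with hydef
      have hyne : y ≠ [] := St18.ycand_ne_nil
      have hunb : St18.Unbordered y := St18.ycand_unbordered hab
      have hw₀y : w₀ <:+: y := by
        refine List.IsInfix.trans ?_ (St18.w_infix_ycand a b (w₀ ++ [σ.symm a]))
        exact ⟨[], [σ.symm a], by simp⟩
      have hwy : w <:+: y := by
        refine List.IsInfix.trans ?_ hw₀y
        exact ⟨(w.map σ.symm).reverse, (w.map σ).reverse, rfl⟩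
      have hyF : y ∉ St18.Ffac X := fun h => hwF (St18.mem_Ffac_of_infix hwy h)
      have hθyF : (y.map σ).reverse ∉ St18.Ffac X := by
        intro h
        apply hwF
        refine St18.mem_Ffac_of_infix ?_ h
        have h1 : (w.map σ.symm).reverse <:+: y := by
          refine List.IsInfix.trans ?_ hw₀y
          exact ⟨[], w ++ (w.map σ).reverse, by rw [hw₀]; simp [List.append_assoc]⟩
        have h2 := List.reverse_infix.2 (h1.map σ)
        simpa using h2
      have hθ'yF : (y.map σ.symm).reverse ∉ St18.Ffac X := by
        intro h
        apply hwF
        refine St18.mem_Ffac_of_infix ?_ h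
        have h1 : (w.map σ).reverse <:+: y := by
          refine List.IsInfix.trans ?_ hw₀y
          exact ⟨(w.map σ.symm).reverse ++ w, [], by rw [hw₀]; simp [List.append_assoc]⟩
        have h2 := List.reverse_infix.2 (h1.map σ.symm)
        simpa using h2
      refine ⟨St18.Zset X y, Set.subset_union_left,
        St18.code_Z hcode hyne hunb hyF, St18.complete_Z hyne hyF, ?_,
        St18.reg_Zset hreg hcode hyne⟩
      exact St18.indep_Z (θ' := fun v => (v.map σ.symm).reverse)
        (fun u v h => List.reverse_infix.2 (h.map σ))
        (fun u v h => List.reverse_infix.2 (h.map σ.symm))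
        (fun v => by simp) hθyF hθ'yF (St18.hN_anti σ hab w₀) hind
end
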